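/- arXiv:2105.09925 — 4 statements merged into one kernel-verified Lean document; each statement's English description precedes it below -/
import Mathlib

section
/- Every matrix in USD₂ is of the form 𝒫(p,q,ξ) for some p,q,ξ ∈ [0,1] satisfying (1−p)(1−q) ≥ p·q·ξ. (Forward direction of Lemma 1.) -/
open Matrix
open scoped ComplexOrder

/-- A qubit state: a positive semidefinite 2×2 complex matrix with trace 1. -/
def QubitState (ρ : Matrix (Fin 2) (Fin 2) ℂ) : Prop :=
  ρ.PosSemidef ∧ ρ.trace = 1

/-- A qubit effect: a 2×2 complex matrix `E` with both `E` and `1 - E` positive semidefinite. -/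
def QubitEffect (E : Matrix (Fin 2) (Fin 2) ℂ) : Prop :=
  E.PosSemidef ∧ (1 - E).PosSemidef

/-- A realization of a 3×3 correlation matrix `P` by three qubit states, a three-outcome
qubit POVM `(M11, M21, M31)` and a two-outcome qubit POVM `(M12, M22)`. -/
def IsRealization (P : Matrix (Fin 3) (Fin 3) ℝ)
    (ρ : Fin 3 → Matrix (Fin 2) (Fin 2) ℂ)
    (M11 M21 M31 M12 M22 : Matrix (Fin 2) (Fin 2) ℂ) : Prop :=
  (∀ x, QubitState (ρ x)) ∧
  QubitEffect M11 ∧ QubitEffect M21 ∧ QubitEffect M31 ∧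
  M11 + M21 + M31 = 1 ∧
  QubitEffect M12 ∧ QubitEffect M22 ∧
  M12 + M22 = 1 ∧
  (∀ x, P x 0 = ((ρ x * M11).trace).re ∧
        P x 1 = ((ρ x * M21).trace).re ∧
        P x 2 = ((ρ x * M12).trace).re)

/-- The USD pattern of zeros and ones of the correlation matrix, Eq. (3). -/
def USDpattern (P : Matrix (Fin 3) (Fin 3) ℝ) : Prop :=
  P 0 2 = 0 ∧ P 1 1 = 0 ∧ P 1 2 = 1 ∧ P 2 0 = 0

/-- The set USD₂ of qubit USD correlations. -/
def USD2 (P : Matrix (Fin 3) (Fin 3) ℝ) : Prop :=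
  USDpattern P ∧
  ∃ ρ M11 M21 M31 M12 M22, IsRealization P ρ M11 M21 M31 M12 M22

/-- A three-outcome qubit POVM is simulable by dichotomic measurements, Eq. (1). -/
def Simulable (M11 M21 M31 : Matrix (Fin 2) (Fin 2) ℂ) : Prop :=
  ∃ p1 p2 p3 : ℝ, ∃ N11 N22 N13 : Matrix (Fin 2) (Fin 2) ℂ,
    0 ≤ p1 ∧ 0 ≤ p2 ∧ 0 ≤ p3 ∧ p1 + p2 + p3 = 1 ∧
    QubitEffect N11 ∧ QubitEffect N22 ∧ QubitEffect N13 ∧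
    M11 = p1 • N11 + p3 • N13 ∧
    M21 = p1 • (1 - N11) + p2 • N22 ∧
    M31 = p2 • (1 - N22) + p3 • (1 - N13)

/-- The set SIM₂ of simulable trichotomic qubit correlations in the minimal scenario. -/
def SIM2 (P : Matrix (Fin 3) (Fin 3) ℝ) : Prop :=
  ∃ ρ M11 M21 M31 M12 M22, IsRealization P ρ M11 M21 M31 M12 M22 ∧
    Simulable M11 M21 M31

/-- The parameterized USD correlation matrix 𝒫(p, q, ξ) of Eq. (4). -/
noncomputable def Pmat (p q ξ : ℝ) : Matrix (Fin 3) (Fin 3) ℝ :=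
  !![p * ξ,       q,           0;
     p * (1 - ξ), 0,           1;
     0,           q * (1 - ξ), ξ]



private lemma trace_conjT_self_nonneg (X : Matrix (Fin 2) (Fin 2) ℂ) :
    0 ≤ (Xᴴ * X).trace := by
  rw [Matrix.trace]
  refine Finset.sum_nonneg fun i _ => ?_
  rw [Matrix.diag_apply, Matrix.mul_apply]
  exact Finset.sum_nonneg fun j _ => by
    simpa [Matrix.conjTranspose_apply] using star_mul_self_nonneg (X j i)

private lemma eq_zero_of_trace_conjT_self {X : Matrix (Fin 2) (Fin 2) ℂ}
    (h : (Xᴴ * X).trace = 0) : X = 0 := by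
  have h' : ∀ i ∈ Finset.univ, (0:ℂ) ≤ (Xᴴ * X).diag i := fun i _ => by
    rw [Matrix.diag_apply, Matrix.mul_apply]
    exact Finset.sum_nonneg fun j _ => by
      simpa [Matrix.conjTranspose_apply] using star_mul_self_nonneg (X j i)
  rw [Matrix.trace] at h
  have hz := (Finset.sum_eq_zero_iff_of_nonneg h').mp h
  ext j i
  have := hz i (Finset.mem_univ i)
  rw [Matrix.diag_apply, Matrix.mul_apply] at this
  have h2 : ∀ k ∈ Finset.univ, (0:ℂ) ≤ Xᴴ i k * X k i := fun k _ => by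
    simpa [Matrix.conjTranspose_apply] using star_mul_self_nonneg (X k i)
  have := (Finset.sum_eq_zero_iff_of_nonneg h2).mp this j (Finset.mem_univ j)
  rw [Matrix.conjTranspose_apply] at this
  simpa using CStarRing.star_mul_self_eq_zero_iff (X j i) |>.mp this

private lemma trace_key (C D : Matrix (Fin 2) (Fin 2) ℂ) :
    (Cᴴ * C * (Dᴴ * D)).trace = ((C * Dᴴ)ᴴ * (C * Dᴴ)).trace := by
  rw [conjTranspose_mul, conjTranspose_conjTranspose]
  rw [show Cᴴ * C * (Dᴴ * D) = (Cᴴ * (C * Dᴴ)) * D by noncomm_ring]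
  rw [trace_mul_comm]
  congr 1
  noncomm_ring

open scoped MatrixOrder in
private lemma psd_exists_conjT {A : Matrix (Fin 2) (Fin 2) ℂ}
    (hA : A.PosSemidef) : ∃ B : Matrix (Fin 2) (Fin 2) ℂ, A = Bᴴ * B := by
  obtain ⟨B, hB⟩ := CStarAlgebra.nonneg_iff_eq_star_mul_self.mp hA.nonneg
  exact ⟨B, hB⟩

private lemma trace_psd_mul_nonneg {A B : Matrix (Fin 2) (Fin 2) ℂ}
    (hA : A.PosSemidef) (hB : B.PosSemidef) : 0 ≤ (A * B).trace := by
  obtain ⟨C, rfl⟩ := psd_exists_conjT hA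
  obtain ⟨D, rfl⟩ := psd_exists_conjT hB
  rw [trace_key]
  exact trace_conjT_self_nonneg _

private lemma psd_mul_eq_zero {A B : Matrix (Fin 2) (Fin 2) ℂ}
    (hA : A.PosSemidef) (hB : B.PosSemidef) (h : (A * B).trace = 0) : A * B = 0 := by
  obtain ⟨C, rfl⟩ := psd_exists_conjT hA
  obtain ⟨D, rfl⟩ := psd_exists_conjT hB
  rw [trace_key] at h
  have hX : C * Dᴴ = 0 := eq_zero_of_trace_conjT_self h
  calc Cᴴ * C * (Dᴴ * D) = Cᴴ * (C * Dᴴ) * D := by noncomm_ring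
    _ = 0 := by rw [hX]; simp

private lemma psd_mul_eq_zero_of_re {A B : Matrix (Fin 2) (Fin 2) ℂ}
    (hA : A.PosSemidef) (hB : B.PosSemidef) (h : ((A * B).trace).re = 0) : A * B = 0 := by
  apply psd_mul_eq_zero hA hB
  have h0 := trace_psd_mul_nonneg hA hB
  rw [Complex.nonneg_iff] at h0
  exact Complex.ext (by simpa using h) (by simpa using h0.2.symm)

private lemma psd_trace_zero {A : Matrix (Fin 2) (Fin 2) ℂ}
    (hA : A.PosSemidef) (h : A.trace = 0) : A = 0 := by
  obtain ⟨C, rfl⟩ := psd_exists_conjT hA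
  rw [eq_zero_of_trace_conjT_self h]
  simp

private lemma psd_det_nonneg {A : Matrix (Fin 2) (Fin 2) ℂ}
    (hA : A.PosSemidef) : 0 ≤ A.det := by
  obtain ⟨C, rfl⟩ := psd_exists_conjT hA
  rw [Matrix.det_mul, Matrix.det_conjTranspose]
  exact star_mul_self_nonneg _

private lemma pol2 (A B : Matrix (Fin 2) (Fin 2) ℂ) :
    A * B + B * A = A.trace • B + B.trace • A
      + ((A * B).trace - A.trace * B.trace) • (1 : Matrix (Fin 2) (Fin 2) ℂ) := by
  ext i j
  fin_cases i <;> fin_cases j <;>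
    simp [Matrix.mul_apply, Matrix.trace, Fin.sum_univ_two, Matrix.one_apply] <;> ring

private lemma det2 (A : Matrix (Fin 2) (Fin 2) ℂ) :
    2 * A.det = A.trace * A.trace - (A * A).trace := by
  simp [Matrix.det_fin_two, Matrix.trace, Matrix.mul_apply, Fin.sum_univ_two]
  ring

private lemma ch2 (A : Matrix (Fin 2) (Fin 2) ℂ) :
    A * A = A.trace • A - A.det • (1 : Matrix (Fin 2) (Fin 2) ℂ) := by
  ext i j
  fin_cases i <;> fin_cases j <;>
    simp [Matrix.mul_apply, Matrix.trace, Fin.sum_univ_two, Matrix.one_apply,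
      Matrix.det_fin_two] <;> ring

private lemma idem_of {A : Matrix (Fin 2) (Fin 2) ℂ} (ht : A.trace = 1) (hd : A.det = 0) :
    A * A = A := by
  rw [ch2, ht, hd]
  simp

private lemma sandwich {ρ : Matrix (Fin 2) (Fin 2) ℂ} (h1 : ρ * ρ = ρ) (h2 : ρ.trace = 1)
    (X : Matrix (Fin 2) (Fin 2) ℂ) : ρ * X * ρ = (X * ρ).trace • ρ := by
  have hp := pol2 ρ (X * ρ)
  have htr : (ρ * (X * ρ)).trace = (X * ρ).trace := by
    rw [trace_mul_comm, Matrix.mul_assoc, h1]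
  rw [htr, h2] at hp
  have hXρρ : X * ρ * ρ = X * ρ := by rw [Matrix.mul_assoc, h1]
  rw [hXρρ] at hp
  simp only [one_smul, mul_one, sub_self, zero_smul, add_zero] at hp
  have h3 : ρ * (X * ρ) = (X * ρ).trace • ρ := by
    linear_combination (norm := module) hp
  rw [← Matrix.mul_assoc] at h3
  exact h3

private lemma herm_mul_swap {A B : Matrix (Fin 2) (Fin 2) ℂ}
    (hA : A.IsHermitian) (hB : B.IsHermitian) (h : A * B = 0) : B * A = 0 := by
  have := congrArg Matrix.conjTranspose h
  rwa [Matrix.conjTranspose_mul, hA.eq, hB.eq, Matrix.conjTranspose_zero] at this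

private lemma det_eq_zero_left {A B : Matrix (Fin 2) (Fin 2) ℂ}
    (h : A * B = 0) (hB : B.trace = 1) : A.det = 0 := by
  by_contra hd
  have hu : IsUnit A.det := isUnit_iff_ne_zero.mpr hd
  have hB0 : B = 0 := by
    calc B = A⁻¹ * A * B := by rw [Matrix.nonsing_inv_mul _ hu, Matrix.one_mul]
      _ = A⁻¹ * (A * B) := by rw [Matrix.mul_assoc]
      _ = 0 := by rw [h, Matrix.mul_zero]
  rw [hB0] at hB
  simp at hB

private lemma cstar_nonneg_eq_re {z : ℂ} (h : 0 ≤ z) : z = (z.re : ℂ) := by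
  rw [Complex.nonneg_iff] at h
  exact Complex.ext (by simp) (by simpa using h.2.symm)


/-- Forward direction of Lemma 1: every matrix in USD₂ is of the form 𝒫(p,q,ξ) with
`p, q, ξ ∈ [0,1]` satisfying `(1-p)(1-q) ≥ p q ξ`. -/
theorem usd2_mem_imp_Pmat_form (P : Matrix (Fin 3) (Fin 3) ℝ) (hP : USD2 P) :
    ∃ p q ξ : ℝ, p ∈ Set.Icc (0 : ℝ) 1 ∧ q ∈ Set.Icc (0 : ℝ) 1 ∧ ξ ∈ Set.Icc (0 : ℝ) 1 ∧
      (1 - p) * (1 - q) ≥ p * q * ξ ∧ P = Pmat p q ξ := by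
  obtain ⟨⟨h02, h11, h12, h20⟩, ρ, M11, M21, M31, M12, M22,
    hρ, hE11, hE21, hE31, hsum3, hE12, hE22, hsum2, htr⟩ := hP
  -- basic state facts
  have hσP : ∀ x, (ρ x).PosSemidef := fun x => (hρ x).1
  have hσT : ∀ x, (ρ x).trace = 1 := fun x => (hρ x).2
  have hσH : ∀ x, (ρ x).IsHermitian := fun x => (hσP x).isHermitian
  -- Step A: vanishing products
  have S12 : ρ 0 * M12 = 0 := by
    apply psd_mul_eq_zero_of_re (hσP 0) hE12.1
    rw [← (htr 0).2.2]; exact h02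
  have S21 : ρ 1 * M21 = 0 := by
    apply psd_mul_eq_zero_of_re (hσP 1) hE21.1
    rw [← (htr 1).2.1]; exact h11
  have S11 : ρ 2 * M11 = 0 := by
    apply psd_mul_eq_zero_of_re (hσP 2) hE11.1
    rw [← (htr 2).1]; exact h20
  have hM22 : M22 = 1 - M12 := by rw [← hsum2]; abel
  have S22 : ρ 1 * M22 = 0 := by
    apply psd_mul_eq_zero (hσP 1) hE22.1
    have hsum : (ρ 1 * M12).trace + (ρ 1 * M22).trace = 1 := by
      rw [← trace_add, ← Matrix.mul_add, hsum2, Matrix.mul_one, hσT 1]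
    have hge := trace_psd_mul_nonneg (hσP 1) hE22.1
    have hre : ((ρ 1 * M22).trace).re = 0 := by
      have h1 : ((ρ 1 * M12).trace).re = 1 := by rw [← (htr 1).2.2]; exact h12
      have := congrArg Complex.re hsum
      simp only [Complex.add_re, Complex.one_re, h1] at this
      linarith
    rw [Complex.nonneg_iff] at hge
    exact Complex.ext (by simpa using hre) (by simpa using hge.2.symm)
  -- effects are Hermitian
  have hM12H : M12.IsHermitian := hE12.1.isHermitian
  have hM21H : M21.IsHermitian := hE21.1.isHermitian
  have hM11H : M11.IsHermitian := hE11.1.isHermitian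
  -- M12 * ρ 1 = ρ 1
  have hσ2M12 : ρ 1 * M12 = ρ 1 := by
    have : ρ 1 * (1 - M12) = 0 := by rw [← hM22]; exact S22
    rw [Matrix.mul_sub, Matrix.mul_one] at this
    exact (sub_eq_zero.mp this).symm
  have hM12σ2 : M12 * ρ 1 = ρ 1 := by
    have := congrArg Matrix.conjTranspose hσ2M12
    rwa [Matrix.conjTranspose_mul, (hσH 1).eq, hM12H.eq] at this
  -- orthogonality of the two first states
  have hσ12 : ρ 0 * ρ 1 = 0 := by
    calc ρ 0 * ρ 1 = ρ 0 * (M12 * ρ 1) := by rw [hM12σ2]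
      _ = (ρ 0 * M12) * ρ 1 := by rw [Matrix.mul_assoc]
      _ = 0 := by rw [S12, Matrix.zero_mul]
  have hσ21 : ρ 1 * ρ 0 = 0 := herm_mul_swap (hσH 0) (hσH 1) hσ12
  -- idempotency
  have hd1 : (ρ 0).det = 0 := det_eq_zero_left hσ12 (hσT 1)
  have hd2 : (ρ 1).det = 0 := det_eq_zero_left hσ21 (hσT 0)
  have hι1 : ρ 0 * ρ 0 = ρ 0 := idem_of (hσT 0) hd1
  have hι2 : ρ 1 * ρ 1 = ρ 1 := idem_of (hσT 1) hd2
  -- ρ 0 + ρ 1 = 1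
  have hsum1 : ρ 0 + ρ 1 = 1 := by
    set E : Matrix (Fin 2) (Fin 2) ℂ := 1 - ρ 0 - ρ 1 with hE
    have hEH : Eᴴ = E := by
      rw [hE]
      simp [Matrix.conjTranspose_sub, (hσH 0).eq, (hσH 1).eq]
    have hEidem : E * E = E := by
      rw [hE]
      simp only [Matrix.sub_mul, Matrix.mul_sub, Matrix.one_mul, Matrix.mul_one,
        hι1, hι2, hσ12, hσ21]
      abel
    have hEpsd : E.PosSemidef := by
      have hEE : E = Eᴴ * E := by rw [hEH, hEidem]
      rw [hEE]
      exact posSemidef_conjTranspose_mul_self E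
    have hEtr : E.trace = 0 := by
      rw [hE]
      simp [Matrix.trace_sub, Matrix.trace_one, hσT 0, hσT 1]
      norm_num
    have := psd_trace_zero hEpsd hEtr
    rw [hE] at this
    linear_combination (norm := module) -this
  -- M12 = ρ 1
  have hM12σ1 : M12 * ρ 0 = 0 := herm_mul_swap (hσH 0) hM12H S12
  have hM12eq : M12 = ρ 1 := by
    calc M12 = M12 * (ρ 0 + ρ 1) := by rw [hsum1, Matrix.mul_one]
      _ = M12 * ρ 0 + M12 * ρ 1 := by rw [Matrix.mul_add]
      _ = ρ 1 := by rw [hM12σ1, hM12σ2, zero_add]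
  -- q
  set q : ℝ := P 0 1 with hqdef
  have hqtr : (ρ 0 * M21).trace = (q : ℂ) := by
    have hge := trace_psd_mul_nonneg (hσP 0) hE21.1
    rw [cstar_nonneg_eq_re hge, ← (htr 0).2.1]
  have hq0 : 0 ≤ q := by
    have hge := trace_psd_mul_nonneg (hσP 0) hE21.1
    rw [hqtr, Complex.nonneg_iff] at hge
    simpa using hge.1
  have hq1 : q ≤ 1 := by
    have hge := trace_psd_mul_nonneg (hσP 0) hE21.2
    have : (ρ 0 * (1 - M21)).trace = 1 - (q : ℂ) := by
      rw [Matrix.mul_sub, Matrix.mul_one, trace_sub, hσT 0, hqtr]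
    rw [this, Complex.nonneg_iff] at hge
    simp only [Complex.sub_re, Complex.one_re, Complex.ofReal_re] at hge
    linarith [hge.1]
  -- M21 = q • ρ 0
  have hM21σ2 : M21 * ρ 1 = 0 := herm_mul_swap (hσH 1) hM21H S21
  have hM21eq : M21 = (q : ℂ) • ρ 0 := by
    have hs := sandwich hι1 (hσT 0) M21
    have haux : ρ 1 * (M21 * ρ 0) = 0 := by
      rw [← Matrix.mul_assoc, S21, Matrix.zero_mul]
    calc M21 = (ρ 0 + ρ 1) * (M21 * (ρ 0 + ρ 1)) := by
          rw [hsum1, Matrix.mul_one, Matrix.one_mul]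
      _ = ρ 0 * (M21 * ρ 0) := by
          simp only [Matrix.mul_add, Matrix.add_mul, hM21σ2, haux,
            Matrix.mul_zero, add_zero]
      _ = (M21 * ρ 0).trace • ρ 0 := by rw [← Matrix.mul_assoc]; exact hs
      _ = (q : ℂ) • ρ 0 := by rw [trace_mul_comm, hqtr]
  -- ξ
  set ξ : ℝ := P 2 2 with hξdef
  have hξtr : (ρ 2 * ρ 1).trace = (ξ : ℂ) := by
    have hge : 0 ≤ (ρ 2 * ρ 1).trace := trace_psd_mul_nonneg (hσP 2) (hσP 1)
    rw [cstar_nonneg_eq_re hge, ← hM12eq, ← (htr 2).2.2]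
  have hξ0 : 0 ≤ ξ := by
    have hge := trace_psd_mul_nonneg (hσP 2) (hσP 1)
    rw [hξtr, Complex.nonneg_iff] at hge
    simpa using hge.1
  have hσ31tr : (ρ 2 * ρ 0).trace = 1 - (ξ : ℂ) := by
    have : ρ 2 * ρ 0 + ρ 2 * ρ 1 = ρ 2 := by
      rw [← Matrix.mul_add, hsum1, Matrix.mul_one]
    have htr2 := congrArg Matrix.trace this
    rw [trace_add, hσT 2, hξtr] at htr2
    linear_combination htr2
  have hξ1 : ξ ≤ 1 := by
    have hge := trace_psd_mul_nonneg (hσP 2) (hσP 0)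
    rw [hσ31tr, Complex.nonneg_iff] at hge
    simp only [Complex.sub_re, Complex.one_re, Complex.ofReal_re] at hge
    linarith [hge.1]
  -- τ and traces against τ
  set τ : Matrix (Fin 2) (Fin 2) ℂ := 1 - ρ 2 with hτ
  have hτtr : τ.trace = 1 := by
    rw [hτ, Matrix.trace_sub, Matrix.trace_one, hσT 2]
    norm_num
  have hσ1τtr : (ρ 0 * τ).trace = (ξ : ℂ) := by
    rw [hτ, Matrix.mul_sub, Matrix.mul_one, trace_sub, hσT 0,
      trace_mul_comm, hσ31tr]
    ring
  have hσ2τtr : (ρ 1 * τ).trace = 1 - (ξ : ℂ) := by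
    rw [hτ, Matrix.mul_sub, Matrix.mul_one, trace_sub, hσT 1,
      trace_mul_comm, hξtr]
  have hτσ1tr : (τ * ρ 0).trace = (ξ : ℂ) := by rw [trace_mul_comm, hσ1τtr]
  -- key: existence of p with M11 = p • τ and the inequality
  have key : ∃ p : ℝ, 0 ≤ p ∧ p ≤ 1 ∧ M11 = (p : ℂ) • τ ∧
      p * q * ξ ≤ (1 - p) * (1 - q) := by
    rcases eq_or_ne (ρ 2).det 0 with hdet | hdet
    · -- ρ 2 is a pure state
      have hι3 : ρ 2 * ρ 2 = ρ 2 := idem_of (hσT 2) hdet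
      have hτidem : τ * τ = τ := by
        rw [hτ]
        simp only [Matrix.sub_mul, Matrix.mul_sub, Matrix.one_mul, Matrix.mul_one, hι3]
        abel
      have hτH : τᴴ = τ := by
        rw [hτ]
        simp [Matrix.conjTranspose_sub, (hσH 2).eq]
      have hτpsd : τ.PosSemidef := by
        have hEE : τ = τᴴ * τ := by rw [hτH, hτidem]
        rw [hEE]
        exact posSemidef_conjTranspose_mul_self τ
      have hM11σ3 : M11 * ρ 2 = 0 := herm_mul_swap (hσH 2) hM11H S11
      -- p
      have hge : 0 ≤ (M11 * τ).trace := by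
        rw [trace_mul_comm]
        exact trace_psd_mul_nonneg hτpsd hE11.1
      set p : ℝ := ((M11 * τ).trace).re with hpdef
      have hptr : (M11 * τ).trace = (p : ℂ) := cstar_nonneg_eq_re hge
      have hp0 : 0 ≤ p := by
        rw [hptr, Complex.nonneg_iff] at hge
        simpa using hge.1
      have hp1 : p ≤ 1 := by
        have hge2 : 0 ≤ ((1 - M11) * τ).trace := by
          rw [trace_mul_comm]
          exact trace_psd_mul_nonneg hτpsd hE11.2
        have : ((1 - M11) * τ).trace = 1 - (p : ℂ) := by
          rw [Matrix.sub_mul, Matrix.one_mul, trace_sub, hτtr, hptr]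
        rw [this, Complex.nonneg_iff] at hge2
        simp only [Complex.sub_re, Complex.one_re, Complex.ofReal_re] at hge2
        linarith [hge2.1]
      -- M11 = p • τ
      have hsum1' : τ + ρ 2 = 1 := by rw [hτ]; abel
      have hM11eq : M11 = (p : ℂ) • τ := by
        have hs := sandwich hτidem hτtr M11
        have haux : ρ 2 * (M11 * τ) = 0 := by
          rw [← Matrix.mul_assoc, S11, Matrix.zero_mul]
        calc M11 = (τ + ρ 2) * (M11 * (τ + ρ 2)) := by
              rw [hsum1', Matrix.mul_one, Matrix.one_mul]
          _ = τ * (M11 * τ) := by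
              simp only [Matrix.mul_add, Matrix.add_mul, hM11σ3, haux,
                Matrix.mul_zero, add_zero]
          _ = (M11 * τ).trace • τ := by rw [← Matrix.mul_assoc]; exact hs
          _ = (p : ℂ) • τ := by rw [hptr]
      -- inequality from PSD of M31
      have hM31eq : M31 = 1 - (p : ℂ) • τ - (q : ℂ) • ρ 0 := by
        rw [← hM11eq, ← hM21eq, ← hsum3]
        abel
      have htrM31 : M31.trace = 2 - (p : ℂ) - (q : ℂ) := by
        rw [hM31eq]
        simp [Matrix.trace_sub, Matrix.trace_smul, Matrix.trace_one, hτtr, hσT 0,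
          smul_eq_mul]
      have hσ1τtr' : (ρ 0 * τ).trace = (ξ : ℂ) := hσ1τtr
      have htrM31sq : (M31 * M31).trace
          = 2 - 2 * (p : ℂ) - 2 * q + p ^ 2 + q ^ 2 + 2 * p * q * ξ := by
        rw [hM31eq]
        simp only [Matrix.sub_mul, Matrix.mul_sub, Matrix.one_mul, Matrix.mul_one,
          Matrix.smul_mul, Matrix.mul_smul, hτidem, hι1, smul_smul,
          Matrix.trace_sub, Matrix.trace_smul, Matrix.trace_one, hτtr, hσT 0,
          hτσ1tr, hσ1τtr', smul_eq_mul, Fintype.card_fin]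
        push_cast
        ring
      have hdet31 : M31.det = (((1 - p) * (1 - q) - p * q * ξ : ℝ) : ℂ) := by
        have h2d := det2 M31
        rw [htrM31, htrM31sq] at h2d
        push_cast
        linear_combination h2d / 2
      have hdge := psd_det_nonneg hE31.1
      rw [hdet31, Complex.zero_le_real] at hdge
      exact ⟨p, hp0, hp1, hM11eq, by linarith⟩
    · -- ρ 2 has full rank, so M11 = 0
      have hu : IsUnit (ρ 2).det := isUnit_iff_ne_zero.mpr hdet
      have hM110 : M11 = 0 := by
        calc M11 = (ρ 2)⁻¹ * (ρ 2) * M11 := by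
              rw [Matrix.nonsing_inv_mul _ hu, Matrix.one_mul]
          _ = (ρ 2)⁻¹ * (ρ 2 * M11) := by rw [Matrix.mul_assoc]
          _ = 0 := by rw [S11, Matrix.mul_zero]
      refine ⟨0, le_refl 0, zero_le_one, by rw [hM110]; simp, by simp; nlinarith⟩
  obtain ⟨p, hp0, hp1, hM11f, hineq⟩ := key
  refine ⟨p, q, ξ, ⟨hp0, hp1⟩, ⟨hq0, hq1⟩, ⟨hξ0, hξ1⟩, hineq, ?_⟩
  -- entrywise verification
  have e00 : P 0 0 = p * ξ := by
    have : ((ρ 0) * M11).trace = ((p * ξ : ℝ) : ℂ) := by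
      rw [hM11f, Matrix.mul_smul, trace_smul, hσ1τtr, smul_eq_mul]
      push_cast
      ring
    rw [(htr 0).1, this, Complex.ofReal_re]
  have e10 : P 1 0 = p * (1 - ξ) := by
    have : ((ρ 1) * M11).trace = ((p * (1 - ξ) : ℝ) : ℂ) := by
      rw [hM11f, Matrix.mul_smul, trace_smul, hσ2τtr, smul_eq_mul]
      push_cast
      ring
    rw [(htr 1).1, this, Complex.ofReal_re]
  have e21 : P 2 1 = q * (1 - ξ) := by
    have : ((ρ 2) * M21).trace = ((q * (1 - ξ) : ℝ) : ℂ) := by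
      rw [hM21eq, Matrix.mul_smul, trace_smul, hσ31tr, smul_eq_mul]
      push_cast
      ring
    rw [(htr 2).2.1, this, Complex.ofReal_re]
  funext i j
  fin_cases i <;> fin_cases j <;>
    simp [Pmat, e00, e10, e21, h02, h11, h12, h20, hqdef, hξdef]
end

section
/- For all p,q,ξ ∈ [0,1] with (1−p)(1−q) ≥ p·q·ξ, the matrix 𝒫(p,q,ξ) belongs to USD₂. (Converse direction of Lemma 1.) -/
open Matrix
open scoped ComplexOrder

lemma psd2 (a b c : ℝ) (ha : 0 ≤ a) (hc : 0 ≤ c) (hd : b^2 ≤ a*c) :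
    (!![(a:ℂ), (b:ℝ); (b:ℝ), (c:ℝ)]).PosSemidef := by
  refine Matrix.PosSemidef.of_dotProduct_mulVec_nonneg ?_ ?_
  · ext i j
    fin_cases i <;> fin_cases j <;> simp [Matrix.conjTranspose_apply]
  · intro x
    have key : ∀ u1 u2 v1 v2 : ℝ,
        0 ≤ a*(u1^2+u2^2) + 2*b*(u1*v1+u2*v2) + c*(v1^2+v2^2) := by
      intro u1 u2 v1 v2
      have ht : (u1*v1+u2*v2)^2 ≤ (u1^2+u2^2)*(v1^2+v2^2) := by
        nlinarith [sq_nonneg (u1*v2 - u2*v1)]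
      have h1 : (2*b*(u1*v1+u2*v2))^2 ≤ (a*(u1^2+u2^2)+c*(v1^2+v2^2))^2 := by
        have hb2 : b^2*((u1*v1+u2*v2)^2) ≤ (a*c)*((u1^2+u2^2)*(v1^2+v2^2)) := by
          have := mul_le_mul hd ht (sq_nonneg _) (mul_nonneg ha hc)
          linarith
        nlinarith [sq_nonneg (a*(u1^2+u2^2) - c*(v1^2+v2^2))]
      have h2 : 0 ≤ a*(u1^2+u2^2)+c*(v1^2+v2^2) :=
        add_nonneg (mul_nonneg ha (by positivity)) (mul_nonneg hc (by positivity))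
      nlinarith [h1, h2]
    have := key (x 0).re (x 0).im (x 1).re (x 1).im
    simp only [dotProduct, Matrix.mulVec, Fin.sum_univ_two, Pi.star_apply,
      Matrix.cons_val', Matrix.cons_val_zero, Matrix.cons_val_one, Matrix.head_cons,
      Matrix.empty_val', Matrix.cons_val_fin_one, Matrix.head_fin_const]
    rw [Complex.le_def]
    constructor
    · simp [Complex.add_re, Complex.mul_re, Complex.ofReal_re, Complex.ofReal_im]
      nlinarith [this]
    · simp [Complex.add_im, Complex.mul_im, Complex.ofReal_re, Complex.ofReal_im]
      ring

lemma one_sub2 (a b c : ℝ) :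
    (1 : Matrix (Fin 2) (Fin 2) ℂ) - !![(a:ℂ), (b:ℝ); (b:ℝ), (c:ℝ)]
      = !![((1-a:ℝ):ℂ), ((-b:ℝ):ℂ); ((-b:ℝ):ℂ), ((1-c:ℝ):ℂ)] := by
  ext i j
  fin_cases i <;> fin_cases j <;>
    simp [Matrix.sub_apply, Matrix.one_apply] <;> push_cast <;> ring

lemma eff2 (a b c : ℝ) (ha : 0 ≤ a) (hc : 0 ≤ c) (hd : b^2 ≤ a*c)
    (hd1 : b^2 ≤ (1-a)*(1-c)) (ha1 : a ≤ 1) (hc1 : c ≤ 1) :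
    QubitEffect !![(a:ℂ), (b:ℝ); (b:ℝ), (c:ℝ)] := by
  refine ⟨psd2 a b c ha hc hd, ?_⟩
  rw [one_sub2]
  have := psd2 (1-a) (-b) (1-c) (by linarith) (by linarith) (by nlinarith)
  convert this using 2

lemma tr_re (a b c d e f : ℝ) :
    ((!![(a:ℂ),(b:ℝ);(b:ℝ),(c:ℝ)] * !![(d:ℂ),(e:ℝ);(e:ℝ),(f:ℝ)]).trace).re
      = a*d + 2*(b*e) + c*f := by
  simp [Matrix.trace, Matrix.mul_apply, Fin.sum_univ_two, Matrix.diag,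
    Complex.add_re, Complex.mul_re, Complex.ofReal_re, Complex.ofReal_im]
  ring


lemma sqx (xi : ℝ) (h0 : 0 ≤ xi) (h1 : xi ≤ 1) :
    (Real.sqrt (xi*(1-xi)))^2 = xi*(1-xi) :=
  Real.sq_sqrt (by nlinarith)

/-- Converse direction of Lemma 1: for all `p, q, ξ ∈ [0,1]` with `(1-p)(1-q) ≥ p q ξ`,
the matrix 𝒫(p,q,ξ) belongs to USD₂. -/
theorem Pmat_mem_usd2 (p q ξ : ℝ) (hp : p ∈ Set.Icc (0 : ℝ) 1) (hq : q ∈ Set.Icc (0 : ℝ) 1)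
    (hξ : ξ ∈ Set.Icc (0 : ℝ) 1) (hcon : (1 - p) * (1 - q) ≥ p * q * ξ) :
    USD2 (Pmat p q ξ) := by
  obtain ⟨hp0, hp1⟩ := hp
  obtain ⟨hq0, hq1⟩ := hq
  obtain ⟨hx0, hx1⟩ := hξ
  have hs2 : (Real.sqrt (ξ*(1-ξ)))^2 = ξ*(1-ξ) := sqx ξ hx0 hx1
  have hs0 : 0 ≤ Real.sqrt (ξ*(1-ξ)) := Real.sqrt_nonneg _
  generalize hsd : Real.sqrt (ξ*(1-ξ)) = s at hs2 hs0
  have hps : (p*s)^2 = p^2*(ξ*(1-ξ)) := by rw [mul_pow, hs2]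
  have hps2 : p*s^2 = p*(ξ*(1-ξ)) := by rw [hs2]
  have hkey : 0 ≤ 1 - p*ξ - q := by
    nlinarith [mul_nonneg (mul_nonneg hp0 (by linarith : (0:ℝ) ≤ 1 - q)) (by linarith : (0:ℝ) ≤ 1 - ξ)]
  constructor
  · refine ⟨?_, ?_, ?_, ?_⟩ <;> simp [Pmat]
  refine ⟨![!![((1:ℝ):ℂ), ((0:ℝ):ℂ); ((0:ℝ):ℂ), ((0:ℝ):ℂ)], !![((0:ℝ):ℂ), ((0:ℝ):ℂ); ((0:ℝ):ℂ), ((1:ℝ):ℂ)], !![((1-ξ:ℝ):ℂ), ((s:ℝ):ℂ); ((s:ℝ):ℂ), ((ξ:ℝ):ℂ)]], !![((p*ξ:ℝ):ℂ), ((-(p*s):ℝ):ℂ); ((-(p*s):ℝ):ℂ), ((p*(1-ξ):ℝ):ℂ)], !![((q:ℝ):ℂ), ((0:ℝ):ℂ); ((0:ℝ):ℂ), ((0:ℝ):ℂ)], !![((1-p*ξ-q:ℝ):ℂ), ((p*s:ℝ):ℂ); ((p*s:ℝ):ℂ), ((1-p*(1-ξ):ℝ):ℂ)], !![((0:ℝ):ℂ),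 ((0:ℝ):ℂ); ((0:ℝ):ℂ), ((1:ℝ):ℂ)], !![((1:ℝ):ℂ), ((0:ℝ):ℂ); ((0:ℝ):ℂ), ((0:ℝ):ℂ)], ?_, ?_, ?_, ?_, ?_, ?_, ?_, ?_, ?_⟩
  · intro x
    fin_cases x
    · refine ⟨psd2 1 0 0 (by norm_num) le_rfl (by norm_num), ?_⟩
      simp [Matrix.trace, Fin.sum_univ_two]
    · refine ⟨psd2 0 0 1 le_rfl (by norm_num) (by norm_num), ?_⟩
      simp [Matrix.trace, Fin.sum_univ_two]
    · refine ⟨psd2 (1-ξ) s ξ (by linarith) hx0 (by nlinarith [hs2]), ?_⟩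
      simp [Matrix.trace, Fin.sum_univ_two] <;> push_cast <;> ring
  · exact eff2 (p*ξ) (-(p*s)) (p*(1-ξ)) (mul_nonneg hp0 hx0)
      (mul_nonneg hp0 (by linarith)) (by nlinarith [hps]) (by nlinarith [hps])
      (by nlinarith) (by nlinarith)
  · exact eff2 q 0 0 hq0 le_rfl (by nlinarith) (by nlinarith) hq1 (by norm_num)
  · exact eff2 (1-p*ξ-q) (p*s) (1-p*(1-ξ)) hkey (by nlinarith) (by nlinarith [hps, hcon])
      (by nlinarith [hps, mul_nonneg (mul_nonneg hp0 hq0) (by linarith : (0:ℝ) ≤ 1-ξ)])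
      (by nlinarith [mul_nonneg hp0 hx0]) (by nlinarith [mul_nonneg hp0 (by linarith : (0:ℝ) ≤ 1-ξ)])
  · ext i j
    fin_cases i <;> fin_cases j <;>
      simp [Matrix.add_apply, Matrix.one_apply] <;> push_cast <;> ring
  · exact eff2 0 0 1 le_rfl (by norm_num) (by norm_num) (by norm_num) (by norm_num) le_rfl
  · exact eff2 1 0 0 (by norm_num) le_rfl (by norm_num) (by norm_num) le_rfl (by norm_num)
  · ext i j
    fin_cases i <;> fin_cases j <;>
      simp [Matrix.add_apply, Matrix.one_apply]
  · intro x
    fin_cases x <;>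
      refine ⟨?_, ?_, ?_⟩ <;>
      simp [Pmat, Matrix.trace, Matrix.mul_apply, Matrix.diag, Fin.sum_univ_two,
        Complex.add_re, Complex.mul_re] <;>
      nlinarith [hps2, hs2]
end

section
/- If D ∈ USD₂ ∩ SIM₂ and D₃,₃ ≠ 0, then there exist f₂, f₃, κ ∈ [0,1] and ξ ∈ (0,1] such that D equals the 3×3 matrix with rows (f₃(1−κ)ξ, f₂κ, 0), (f₃(1−κ)(1−ξ), 0, 1), (0, f₂κ(1−ξ), ξ). -/
open Matrix
open scoped ComplexOrder

variable {n : Type*} [Fintype n] [DecidableEq n]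

lemma trace_conjTranspose_mul (C : Matrix n n ℂ) :
    (Cᴴ * C).trace = ∑ i, ∑ j, star (C j i) * (C j i) := by
  simp [Matrix.trace, Matrix.mul_apply, Matrix.diag, Matrix.conjTranspose_apply]

lemma trace_conjTranspose_mul_nonneg (C : Matrix n n ℂ) : 0 ≤ (Cᴴ * C).trace := by
  rw [trace_conjTranspose_mul]
  exact Finset.sum_nonneg fun i _ => Finset.sum_nonneg fun j _ => star_mul_self_nonneg _

lemma trace_conjTranspose_mul_eq_zero {C : Matrix n n ℂ} (h : (Cᴴ * C).trace = 0) : C = 0 := by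
  rw [trace_conjTranspose_mul] at h
  ext j i
  have h1 : ∀ i ∈ Finset.univ, (0:ℂ) ≤ ∑ j, star (C j i) * (C j i) :=
    fun i _ => Finset.sum_nonneg fun j _ => star_mul_self_nonneg _
  have h2 := (Finset.sum_eq_zero_iff_of_nonneg h1).mp h i (Finset.mem_univ i)
  have h3 := (Finset.sum_eq_zero_iff_of_nonneg
    (fun j _ => star_mul_self_nonneg (C j i))).mp h2 j (Finset.mem_univ j)
  have : Complex.normSq (C j i) = 0 := by
    have := congrArg Complex.re h3
    simpa [Complex.mul_re, Complex.normSq] using this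
  simpa using Complex.normSq_eq_zero.mp this

lemma trace_psd_mul_eq (X Y : Matrix n n ℂ) (A B : Matrix n n ℂ)
    (hA : X = Aᴴ * A) (hB : Y = Bᴴ * B) :
    (X * Y).trace = ((B * Aᴴ)ᴴ * (B * Aᴴ)).trace := by
  subst hA hB
  rw [conjTranspose_mul, conjTranspose_conjTranspose]
  rw [show A * Bᴴ * (B * Aᴴ) = (A * (Bᴴ * B)) * Aᴴ by noncomm_ring]
  rw [Matrix.trace_mul_comm (A * (Bᴴ * B)) Aᴴ]
  noncomm_ring

open scoped MatrixOrder in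
lemma posSemidef_iff_eq_transpose_mul_self' {X : Matrix n n ℂ} :
    X.PosSemidef ↔ ∃ A : Matrix n n ℂ, X = Aᴴ * A := by
  constructor
  · intro hX
    obtain ⟨B, hB⟩ := CStarAlgebra.nonneg_iff_eq_star_mul_self.mp hX.nonneg
    exact ⟨B, hB⟩
  · rintro ⟨A, rfl⟩
    exact posSemidef_conjTranspose_mul_self A

lemma trace_psd_mul_nonneg_s4 {X Y : Matrix n n ℂ} (hX : X.PosSemidef) (hY : Y.PosSemidef) :
    0 ≤ (X * Y).trace := by
  obtain ⟨A, hA⟩ := posSemidef_iff_eq_transpose_mul_self'.mp hX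
  obtain ⟨B, hB⟩ := posSemidef_iff_eq_transpose_mul_self'.mp hY
  rw [trace_psd_mul_eq X Y A B hA hB]
  exact trace_conjTranspose_mul_nonneg _

lemma psd_mul_eq_zero_of_trace {X Y : Matrix n n ℂ} (hX : X.PosSemidef) (hY : Y.PosSemidef)
    (h : (X * Y).trace = 0) : X * Y = 0 := by
  obtain ⟨A, hA⟩ := posSemidef_iff_eq_transpose_mul_self'.mp hX
  obtain ⟨B, hB⟩ := posSemidef_iff_eq_transpose_mul_self'.mp hY
  rw [trace_psd_mul_eq X Y A B hA hB] at h
  have hBA : B * Aᴴ = 0 := trace_conjTranspose_mul_eq_zero h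
  have hAB : A * Bᴴ = 0 := by
    have := congrArg conjTranspose hBA
    simpa [conjTranspose_mul] using this
  rw [hA, hB, show Aᴴ * A * (Bᴴ * B) = Aᴴ * ((A * Bᴴ) * B) by noncomm_ring, hAB]
  simp

lemma re_trace_zero_psd {X Y : Matrix n n ℂ} (hX : X.PosSemidef) (hY : Y.PosSemidef)
    (h : ((X * Y).trace).re = 0) : X * Y = 0 := by
  apply psd_mul_eq_zero_of_trace hX hY
  have h0 := trace_psd_mul_nonneg_s4 hX hY
  rw [Complex.le_def] at h0
  apply Complex.ext
  · simpa using h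
  · simpa using h0.2.symm

lemma trace_psd_mul_real {X Y : Matrix n n ℂ} (hX : X.PosSemidef) (hY : Y.PosSemidef) :
    (X * Y).trace = (((X * Y).trace).re : ℂ) := by
  have h0 := trace_psd_mul_nonneg_s4 hX hY
  rw [Complex.le_def] at h0
  apply Complex.ext <;> simp [h0.2.symm]

noncomputable section

/-- rank-one matrix `v vᴴ` -/
def Rm (v : Fin 2 → ℂ) : Matrix (Fin 2) (Fin 2) ℂ := vecMulVec v (star v)

/-- `(vᴴv)·1 - v vᴴ`, proportional to the projector onto the orthocomplement of `v`. -/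
def Qm (v : Fin 2 → ℂ) : Matrix (Fin 2) (Fin 2) ℂ := (star v ⬝ᵥ v) • 1 - Rm v

lemma Rm_apply (v : Fin 2 → ℂ) (i j) : Rm v i j = v i * star (v j) := rfl

lemma herm_mul_zero_symm {X Y : Matrix (Fin 2) (Fin 2) ℂ} (hX : X.IsHermitian)
    (hY : Y.IsHermitian) (h : X * Y = 0) : Y * X = 0 := by
  have := congrArg conjTranspose h
  rwa [conjTranspose_mul, hX.eq, hY.eq, conjTranspose_zero] at this

lemma mulVec_col {M N P : Matrix (Fin 2) (Fin 2) ℂ} (h : M * N = P) (j : Fin 2) :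
    M.mulVec (fun k => N k j) = fun i => P i j := by
  funext i
  rw [← h]
  simp [Matrix.mulVec, Matrix.mul_apply, dotProduct]

lemma herm_kernel {ρ : Matrix (Fin 2) (Fin 2) ℂ} (hH : ρ.IsHermitian) {v : Fin 2 → ℂ}
    (h : ρ.mulVec v = 0) :
    (star v ⬝ᵥ v) • ρ = ρ.trace • Qm v := by
  have ha : star (ρ 0 0) = ρ 0 0 := hH.apply 0 0
  have hd : star (ρ 1 1) = ρ 1 1 := hH.apply 1 1
  have hb : star (ρ 1 0) = ρ 0 1 := hH.apply 0 1
  have hb' : star (ρ 0 1) = ρ 1 0 := hH.apply 1 0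
  have E0 : ρ 0 0 * v 0 + ρ 0 1 * v 1 = 0 := by
    have := congrFun h 0
    simpa [Matrix.mulVec, dotProduct, Fin.sum_univ_two] using this
  have E1 : ρ 1 0 * v 0 + ρ 1 1 * v 1 = 0 := by
    have := congrFun h 1
    simpa [Matrix.mulVec, dotProduct, Fin.sum_univ_two] using this
  have E0c : ρ 0 0 * star (v 0) + ρ 1 0 * star (v 1) = 0 := by
    have := congrArg star E0
    simpa [star_add, star_mul', ha, hb'] using this
  have E1c : ρ 0 1 * star (v 0) + ρ 1 1 * star (v 1) = 0 := by
    have := congrArg star E1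
    simpa [star_add, star_mul', hd, hb] using this
  ext i j
  fin_cases i <;> fin_cases j <;>
    simp only [Qm, Rm, Matrix.smul_apply, Matrix.sub_apply, Matrix.one_apply, vecMulVec_apply,
      dotProduct, Fin.sum_univ_two, Matrix.trace_fin_two, Pi.star_apply, smul_eq_mul,
      Fin.isValue, Matrix.cons_val', Matrix.cons_val_zero, Matrix.cons_val_one, Matrix.head_cons,
      Fin.zero_eta, Fin.mk_one, if_true, if_false, one_ne_zero, zero_ne_one, mul_one, mul_zero,
      sub_zero, zero_sub]
  · linear_combination star (v 0) * E0 - v 1 * E1c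
  · linear_combination v 0 * E1c + star (v 1) * E0
  · linear_combination v 1 * E0c + star (v 0) * E1
  · linear_combination star (v 1) * E1 - v 0 * E0c

lemma QQ (v : Fin 2 → ℂ) : Qm v * Qm v = (star v ⬝ᵥ v) • Qm v := by
  ext i j
  fin_cases i <;> fin_cases j <;>
    simp [Qm, Rm, Matrix.mul_apply, vecMulVec_apply, Matrix.one_apply, dotProduct,
      Fin.sum_univ_two, Matrix.smul_apply] <;> ring

lemma mul_Rm (X : Matrix (Fin 2) (Fin 2) ℂ) (v : Fin 2 → ℂ) :
    X * Rm v = vecMulVec (X.mulVec v) (star v) := by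
  ext i j
  simp [Rm, Matrix.mul_apply, vecMulVec_apply, Matrix.mulVec, dotProduct, Fin.sum_univ_two]
  fin_cases i <;> simp <;> ring

lemma trace_mul_Rm (X : Matrix (Fin 2) (Fin 2) ℂ) (v : Fin 2 → ℂ) :
    (X * Rm v).trace = star v ⬝ᵥ X.mulVec v := by
  simp [Rm, Matrix.trace_fin_two, Matrix.mul_apply, vecMulVec_apply, Matrix.mulVec, dotProduct,
    Fin.sum_univ_two]
  ring

lemma sandwich_s4 (X : Matrix (Fin 2) (Fin 2) ℂ) (v : Fin 2 → ℂ) :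
    Rm v * X * Rm v = (star v ⬝ᵥ X.mulVec v) • Rm v := by
  ext i j
  simp [Rm, Matrix.mul_apply, vecMulVec_apply, Matrix.mulVec, dotProduct, Fin.sum_univ_two,
    Matrix.smul_apply]
  ring

lemma trace_Rm (v : Fin 2 → ℂ) : (Rm v).trace = star v ⬝ᵥ v := by
  simp [Rm, Matrix.trace_fin_two, vecMulVec_apply, dotProduct, Fin.sum_univ_two]
  ring

lemma trace_Qm (v : Fin 2 → ℂ) : (Qm v).trace = star v ⬝ᵥ v := by
  simp [Qm, Rm, Matrix.trace_fin_two, vecMulVec_apply, dotProduct, Fin.sum_univ_two,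
    Matrix.smul_apply, Matrix.one_apply]
  ring

lemma trace_Rm_mul_Rm (v u : Fin 2 → ℂ) :
    (Rm v * Rm u).trace = (star v ⬝ᵥ u) * (star u ⬝ᵥ v) := by
  simp [Rm, Matrix.trace_fin_two, Matrix.mul_apply, vecMulVec_apply, dotProduct,
    Fin.sum_univ_two]
  ring

lemma nonneg_complex_real {z : ℂ} (h : 0 ≤ z) : z = (z.re : ℂ) ∧ 0 ≤ z.re := by
  rw [Complex.le_def] at h
  exact ⟨by apply Complex.ext <;> simp [h.2.symm], h.1⟩

end

lemma Rm_herm (v : Fin 2 → ℂ) : (Rm v)ᴴ = Rm v := by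
  ext i j; simp [Rm, conjTranspose_apply, vecMulVec_apply, mul_comm]

lemma psd_trace_nonneg {X : Matrix (Fin 2) (Fin 2) ℂ} (hX : X.PosSemidef) : 0 ≤ X.trace := by
  obtain ⟨A, rfl⟩ := posSemidef_iff_eq_transpose_mul_self'.mp hX
  exact trace_conjTranspose_mul_nonneg A

lemma smul_real_trace (p : ℝ) (X Y : Matrix (Fin 2) (Fin 2) ℂ) :
    (X * (p • Y)).trace = (p : ℂ) * (X * Y).trace := by
  rw [mul_smul_comm, trace_smul]
  simp [Complex.real_smul]

lemma split_zero_sum {a b : ℝ} {z w : ℂ} (hz : 0 ≤ z) (hw : 0 ≤ w) (ha : 0 ≤ a) (hb : 0 ≤ b)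
    (h : (a : ℂ) * z + (b : ℂ) * w = 0) : a * z.re = 0 ∧ b * w.re = 0 := by
  obtain ⟨hz1, hz2⟩ := nonneg_complex_real hz
  obtain ⟨hw1, hw2⟩ := nonneg_complex_real hw
  have hre := congrArg Complex.re h
  simp only [Complex.add_re, Complex.mul_re, Complex.ofReal_re, Complex.ofReal_im,
    Complex.zero_re, zero_mul, sub_zero] at hre
  constructor <;> nlinarith [mul_nonneg ha hz2, mul_nonneg hb hw2]

set_option maxHeartbeats 4000000

/-- Any `D ∈ USD₂ ∩ SIM₂` with `D 2 2 ≠ 0` has the form of Eq. (13). -/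
theorem usd2_inter_sim2_form (D : Matrix (Fin 3) (Fin 3) ℝ)
    (hU : USD2 D) (hS : SIM2 D) (h33 : D 2 2 ≠ 0) :
    ∃ f2 f3 κ ξ : ℝ, f2 ∈ Set.Icc (0 : ℝ) 1 ∧ f3 ∈ Set.Icc (0 : ℝ) 1 ∧
      κ ∈ Set.Icc (0 : ℝ) 1 ∧ ξ ∈ Set.Ioc (0 : ℝ) 1 ∧
      D = !![f3 * (1 - κ) * ξ,       f2 * κ,           0;
             f3 * (1 - κ) * (1 - ξ), 0,                1;
             0,                      f2 * κ * (1 - ξ), ξ] := by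
  obtain ⟨⟨hp02, hp11, hp12, hp20⟩, -⟩ := hU
  obtain ⟨σ, A11, A21, A31, B12, B22, hreal, hsim⟩ := hS
  obtain ⟨hstates, hE11, hE21, hE31, hsum3, hE12, hE22, hsum2, hP⟩ := hreal
  obtain ⟨p1, p2, p3, N11, N22, N13, hp1, hp2, hp3, hpsum, hN11, hN22, hN13,
    hM11, hM21, hM31⟩ := hsim
  have hs1 := hstates 0
  have hs2 := hstates 1
  have hs3 := hstates 2
  -- zero products from the USD pattern
  have hσ1B : σ 0 * B12 = 0 := by
    refine re_trace_zero_psd hs1.1 hE12.1 ?_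
    rw [← (hP 0).2.2]; exact hp02
  have hσ2B : σ 1 * (1 - B12) = 0 := by
    refine re_trace_zero_psd hs2.1 hE12.2 ?_
    have ht : (σ 1 * (1 - B12)).trace = (σ 1).trace - (σ 1 * B12).trace := by
      rw [mul_sub, mul_one, trace_sub]
    rw [ht, hs2.2]
    have h12 : ((σ 1 * B12).trace).re = 1 := by rw [← (hP 1).2.2]; exact hp12
    simp [Complex.sub_re, h12]
  have hσ2A21 : σ 1 * A21 = 0 := by
    refine re_trace_zero_psd hs2.1 hE21.1 ?_
    rw [← (hP 1).2.1]; exact hp11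
  have hσ3A11 : σ 2 * A11 = 0 := by
    refine re_trace_zero_psd hs3.1 hE11.1 ?_
    rw [← (hP 2).1]; exact hp20
  -- a nonzero column of σ 1
  have hσ2ne : σ 1 ≠ 0 := by
    intro h
    have h2 := hs2.2
    rw [h, trace_zero] at h2
    exact zero_ne_one h2
  obtain ⟨i0, j0, hij⟩ : ∃ i j, σ 1 i j ≠ 0 := by
    by_contra hcon
    push_neg at hcon
    exact hσ2ne (by ext i j; simpa using hcon i j)
  set v : Fin 2 → ℂ := fun k => σ 1 k j0 with hvdef
  have hv : v ≠ 0 := fun h => hij (congrFun h i0)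
  set n : ℂ := star v ⬝ᵥ v with hndef
  have hn0 : n ≠ 0 := fun h => hv (dotProduct_star_self_eq_zero.mp h)
  obtain ⟨hnre, hnnn⟩ := nonneg_complex_real (dotProduct_star_self_nonneg v)
  have hnrpos : 0 < n.re := lt_of_le_of_ne hnnn (fun h => hn0 (by rw [hndef, hnre, ← h, Complex.ofReal_zero]))
  -- B12 fixes v
  have hB2σ2 : (1 - B12) * σ 1 = 0 := herm_mul_zero_symm hs2.1.1 hE12.2.1 hσ2B
  have hB12v : B12.mulVec v = v := by
    have h1 := mulVec_col hB2σ2 j0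
    have h2 : (1 - B12).mulVec v = 0 := by rw [h1]; funext i; simp
    rw [sub_mulVec, one_mulVec, sub_eq_zero] at h2
    exact h2.symm
  have hσ1v : (σ 0).mulVec v = 0 := by
    rw [← hB12v, mulVec_mulVec, hσ1B, zero_mulVec]
  have hQ1 : n • σ 0 = Qm v := by
    have := herm_kernel hs1.1.1 hσ1v
    rwa [hs1.2, one_smul] at this
  have hB12σ1 : B12 * σ 0 = 0 := herm_mul_zero_symm hs1.1.1 hE12.1.1 hσ1B
  have hBR : n • B12 = Rm v := by
    have h1 : B12 * Qm v = 0 := by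
      rw [← hQ1, mul_smul_comm, hB12σ1, smul_zero]
    have h2 : n • B12 - B12 * Rm v = 0 := by
      rw [← h1, Qm, mul_sub, mul_smul_comm, mul_one]
    rw [mul_Rm, hB12v] at h2
    rw [sub_eq_zero] at h2
    rw [h2]; rfl
  -- the xi relation
  have hξc : n * (σ 2 * B12).trace = star v ⬝ᵥ (σ 2).mulVec v := by
    have : (σ 2 * (n • B12)).trace = n * (σ 2 * B12).trace := by
      rw [mul_smul_comm, trace_smul]; simp
    rw [← this, hBR, trace_mul_Rm]
  -- case on p1
  rcases eq_or_lt_of_le hp1 with hp1z | hp1pos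
  swap
  · -- p1 > 0 : contradiction
    exfalso
    -- decompose trace of σ 1 * A21 = 0
    have htr : (p1 : ℂ) * (σ 1 * (1 - N11)).trace + (p2 : ℂ) * (σ 1 * N22).trace = 0 := by
      have : σ 1 * A21 = σ 1 * (p1 • (1 - N11)) + σ 1 * (p2 • N22) := by
        rw [hM21, mul_add]
      have h0 := congrArg Matrix.trace this
      rw [hσ2A21, trace_zero, trace_add, smul_real_trace, smul_real_trace] at h0
      linear_combination -h0
    have t1nn : 0 ≤ (σ 1 * (1 - N11)).trace := trace_psd_mul_nonneg_s4 hs2.1 hN11.2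
    have t2nn : 0 ≤ (σ 1 * N22).trace := trace_psd_mul_nonneg_s4 hs2.1 hN22.1
    have hsplit := split_zero_sum t1nn t2nn hp1 hp2 htr
    have hterm1 : (σ 1 * (1 - N11)).trace = 0 := by
      have h1 : ((σ 1 * (1 - N11)).trace).re = 0 := by
        have hne : p1 ≠ 0 := ne_of_gt hp1pos
        exact (mul_eq_zero.mp hsplit.1).resolve_left hne
      rw [(nonneg_complex_real t1nn).1, h1, Complex.ofReal_zero]
    have hσ2mN11 : σ 1 * (1 - N11) = 0 := psd_mul_eq_zero_of_trace hs2.1 hN11.2 hterm1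
    -- now σ 2 * N11 = 0
    have htr3 : (p1 : ℂ) * (σ 2 * N11).trace + (p3 : ℂ) * (σ 2 * N13).trace = 0 := by
      have h0 : σ 2 * A11 = σ 2 * (p1 • N11) + σ 2 * (p3 • N13) := by
        rw [hM11, mul_add]
      have h1 := congrArg Matrix.trace h0
      rw [hσ3A11, trace_zero, trace_add, smul_real_trace, smul_real_trace] at h1
      linear_combination -h1
    have t3nn : 0 ≤ (σ 2 * N11).trace := trace_psd_mul_nonneg_s4 hs3.1 hN11.1
    have t4nn : 0 ≤ (σ 2 * N13).trace := trace_psd_mul_nonneg_s4 hs3.1 hN13.1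
    have hsplit3 := split_zero_sum t3nn t4nn hp1 hp3 htr3
    have hterm3 : (σ 2 * N11).trace = 0 := by
      have h1 : ((σ 2 * N11).trace).re = 0 := by
        have hne : p1 ≠ 0 := ne_of_gt hp1pos
        exact (mul_eq_zero.mp hsplit3.1).resolve_left hne
      rw [(nonneg_complex_real t3nn).1, h1, Complex.ofReal_zero]
    have hσ3N11 : σ 2 * N11 = 0 := psd_mul_eq_zero_of_trace hs3.1 hN11.1 hterm3
    have hN11σ2 : N11 * σ 1 = σ 1 := by
      have h0 : (1 - N11) * σ 1 = 0 := herm_mul_zero_symm hs2.1.1 hN11.2.1 hσ2mN11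
      rw [sub_mul, one_mul, sub_eq_zero] at h0
      exact h0.symm
    have hN11v : N11.mulVec v = v := by
      have := mulVec_col hN11σ2 j0
      rw [this]
    have hσ3v : (σ 2).mulVec v = 0 := by
      rw [← hN11v, mulVec_mulVec, hσ3N11, zero_mulVec]
    have hzero : n * (σ 2 * B12).trace = 0 := by rw [hξc, hσ3v, dotProduct_zero]
    have : (σ 2 * B12).trace = 0 := by
      rcases mul_eq_zero.mp hzero with h | h
      · exact absurd h hn0
      · exact h
    apply h33
    rw [(hP 2).2.2, this, Complex.zero_re]
  · -- p1 = 0 : main case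
    subst hp1z
    rw [zero_smul, zero_add] at hM11 hM21
    -- xi facts
    set ξ : ℝ := D 2 2 with hξdef
    have hξre : (σ 2 * B12).trace = (ξ : ℂ) := by
      rw [trace_psd_mul_real hs3.1 hE12.1, ← (hP 2).2.2]
    have hξnn : 0 ≤ ξ := by
      rw [hξdef, (hP 2).2.2]
      exact (nonneg_complex_real (trace_psd_mul_nonneg_s4 hs3.1 hE12.1)).2
    have hξpos : 0 < ξ := lt_of_le_of_ne hξnn (Ne.symm h33)
    have hξ1 : ξ ≤ 1 := by
      have h0 := (nonneg_complex_real (trace_psd_mul_nonneg_s4 hs3.1 hE12.2)).2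
      have ht : (σ 2 * (1 - B12)).trace = (σ 2).trace - (σ 2 * B12).trace := by
        rw [mul_sub, mul_one, trace_sub]
      rw [ht, hs3.2, hξre] at h0
      have : (((1 : ℝ) - ξ : ℝ) : ℂ).re = 1 - ξ := by simp
      simp only [← Complex.ofReal_one, ← Complex.ofReal_sub] at h0
      rw [this] at h0
      linarith
    have hξcc : n * (ξ : ℂ) = star v ⬝ᵥ (σ 2).mulVec v := by rw [← hξre]; exact hξc
    have hstarn : star n = n := by
      rw [hndef, hnre]
      exact Complex.conj_ofReal _
    -- sigma2 = Rm v / n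
    have hσ2B12 : σ 1 * B12 = σ 1 := by
      have := hσ2B
      rw [mul_sub, mul_one, sub_eq_zero] at this
      exact this.symm
    have hs2Rv : σ 1 * Rm v = n • σ 1 := by
      rw [← hBR, mul_smul_comm, hσ2B12]
    have hRvs2 : Rm v * σ 1 = n • σ 1 := by
      have h0 := congrArg conjTranspose hs2Rv
      rwa [conjTranspose_mul, Rm_herm, hs2.1.1.eq, conjTranspose_smul, hs2.1.1.eq, hstarn] at h0
    have hσ2R : n • σ 1 = Rm v := by
      have h1 : Rm v * σ 1 * Rm v = (star v ⬝ᵥ (σ 1).mulVec v) • Rm v := sandwich_s4 (σ 1) v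
      have h2 : Rm v * σ 1 * Rm v = (n * n) • σ 1 := by
        rw [hRvs2, smul_mul_assoc, hs2Rv, smul_smul]
      have h3 : (n * n) • σ 1 = (star v ⬝ᵥ (σ 1).mulVec v) • Rm v := by rw [← h2, h1]
      have h4 := congrArg Matrix.trace h3
      rw [trace_smul, trace_smul, hs2.2, trace_Rm, ← hndef, smul_eq_mul, smul_eq_mul,
        mul_one] at h4
      have h5 : star v ⬝ᵥ (σ 1).mulVec v = n := (mul_right_cancel₀ hn0 h4).symm
      rw [h5] at h3
      have h6 : n • (n • σ 1 - Rm v) = 0 := by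
        rw [smul_sub, smul_smul, h3, sub_self]
      rcases smul_eq_zero.mp h6 with h | h
      · exact absurd h hn0
      · rwa [sub_eq_zero] at h
    -- q-part
    have hqfacts : 0 ≤ D 0 1 ∧ D 0 1 ≤ p2 ∧ D 2 1 = D 0 1 * (1 - ξ) := by
      by_cases hp2z : p2 = 0
      · subst hp2z
        rw [zero_smul] at hM21
        have h01 : D 0 1 = 0 := by rw [(hP 0).2.1, hM21, mul_zero, trace_zero, Complex.zero_re]
        have h21 : D 2 1 = 0 := by rw [(hP 2).2.1, hM21, mul_zero, trace_zero, Complex.zero_re]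
        exact ⟨le_of_eq h01.symm, h01 ▸ hp2, by rw [h01, h21, zero_mul]⟩
      · have hp2pos : 0 < p2 := lt_of_le_of_ne hp2 (Ne.symm hp2z)
        have hσ2N22 : σ 1 * N22 = 0 := by
          have h0 : p2 • (σ 1 * N22) = 0 := by
            rw [← mul_smul_comm, ← hM21, hσ2A21]
          rcases smul_eq_zero.mp h0 with h | h
          · exact absurd h hp2z
          · exact h
        have hN22σ2 : N22 * σ 1 = 0 := herm_mul_zero_symm hs2.1.1 hN22.1.1 hσ2N22
        have hN22v : N22.mulVec v = 0 := by
          have := mulVec_col hN22σ2 j0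
          rw [this]
          funext i
          simp
        have hK : n • N22 = N22.trace • Qm v := herm_kernel hN22.1.1 hN22v
        have hcnn : 0 ≤ N22.trace := psd_trace_nonneg hN22.1
        obtain ⟨hcre, hcrnn⟩ := nonneg_complex_real hcnn
        set c : ℝ := N22.trace.re with hcdef
        -- trace sigma1 N22 = c
        have hT : (n * n) • (σ 0 * N22) = (N22.trace * n) • Qm v := by
          calc (n * n) • (σ 0 * N22) = (n • σ 0) * (n • N22) := by
                rw [smul_mul_assoc, mul_smul_comm, smul_smul]
            _ = Qm v * (N22.trace • Qm v) := by rw [hQ1, hK]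
            _ = N22.trace • (Qm v * Qm v) := mul_smul_comm _ _ _
            _ = N22.trace • (n • Qm v) := by rw [QQ]
            _ = (N22.trace * n) • Qm v := by rw [smul_smul]
        have hT1 := congrArg Matrix.trace hT
        rw [trace_smul, trace_smul, trace_Qm, ← hndef, smul_eq_mul, smul_eq_mul] at hT1
        have htrc : (σ 0 * N22).trace = N22.trace := by
          refine mul_left_cancel₀ (mul_ne_zero hn0 hn0) ?_
          linear_combination hT1
        have hD01 : D 0 1 = p2 * c := by
          rw [(hP 0).2.1, hM21, smul_real_trace, htrc, hcre]
          simp [Complex.ofReal_mul]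
        -- c <= 1 via a nonzero column of Qm v
        have hQne : Qm v ≠ 0 := by
          intro h
          have := trace_Qm v
          rw [h, trace_zero, ← hndef] at this
          exact hn0 this.symm
        obtain ⟨iw, jw, hijw⟩ : ∃ i j, Qm v i j ≠ 0 := by
          by_contra hcon
          push_neg at hcon
          exact hQne (by ext i j; simpa using hcon i j)
        set w : Fin 2 → ℂ := fun k => Qm v k jw with hwdef
        have hw : w ≠ 0 := fun h => hijw (congrFun h iw)
        have hQw : (Qm v).mulVec w = n • w := by
          have := mulVec_col (QQ v) jw
          rw [this]
          funext i
          simp [hwdef, ← hndef]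
        have hN22w : n • N22.mulVec w = (N22.trace * n) • w := by
          have h0 : (n • N22).mulVec w = (N22.trace • Qm v).mulVec w := by rw [hK]
          rw [smul_mulVec, smul_mulVec, hQw, smul_smul] at h0
          exact h0
        have hquad := hN22.2.dotProduct_mulVec_nonneg w
        rw [sub_mulVec, one_mulVec, dotProduct_sub] at hquad
        have hdot : n * (star w ⬝ᵥ N22.mulVec w) = (N22.trace * n) * (star w ⬝ᵥ w) := by
          have h0 := congrArg (fun z => star w ⬝ᵥ z) hN22w
          simp only [dotProduct_smul, smul_eq_mul] at h0
          exact h0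
        obtain ⟨hwre, hwnn⟩ := nonneg_complex_real (dotProduct_star_self_nonneg w)
        have hwpos : 0 < (star w ⬝ᵥ w).re := by
          rcases lt_or_eq_of_le hwnn with h | h
          · exact h
          · exfalso
            apply hw
            apply dotProduct_star_self_eq_zero.mp
            rw [hwre, ← h, Complex.ofReal_zero]
        have hdot2 : star w ⬝ᵥ N22.mulVec w = N22.trace * (star w ⬝ᵥ w) := by
          refine mul_left_cancel₀ hn0 ?_
          linear_combination hdot
        rw [hdot2] at hquad
        have hc1 : c ≤ 1 := by
          have h0 : (0:ℂ) ≤ ((( (star w ⬝ᵥ w).re - c * (star w ⬝ᵥ w).re : ℝ)) : ℂ) := by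
            rw [Complex.ofReal_sub, Complex.ofReal_mul, ← hwre, ← hcre]
            exact hquad
          rw [Complex.zero_le_real] at h0
          nlinarith
        -- trace sigma3 N22 = c (1 - xi)
        have hT3 : n • (σ 2 * N22) = N22.trace • (n • σ 2 - σ 2 * Rm v) := by
          calc n • (σ 2 * N22) = σ 2 * (n • N22) := (mul_smul_comm _ _ _).symm
            _ = σ 2 * (N22.trace • Qm v) := by rw [hK]
            _ = N22.trace • (σ 2 * Qm v) := mul_smul_comm _ _ _
            _ = N22.trace • (n • σ 2 - σ 2 * Rm v) := by
                rw [Qm, mul_sub, mul_smul_comm, mul_one]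
        have hT3t := congrArg Matrix.trace hT3
        rw [trace_smul, trace_smul, trace_sub, trace_smul, hs3.2, trace_mul_Rm, ← hξcc,
          smul_eq_mul, smul_eq_mul, smul_eq_mul, mul_one] at hT3t
        have htrc3 : (σ 2 * N22).trace = N22.trace * (1 - (ξ:ℂ)) := by
          refine mul_left_cancel₀ hn0 ?_
          linear_combination hT3t
        have hD21 : D 2 1 = p2 * (c * (1 - ξ)) := by
          rw [(hP 2).2.1, hM21, smul_real_trace, htrc3, hcre]
          have : ((p2:ℂ) * ((c:ℂ) * (1 - (ξ:ℂ)))) = (((p2 * (c * (1 - ξ)) : ℝ)):ℂ) := by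
            push_cast; ring
          rw [this, Complex.ofReal_re]
        refine ⟨?_, ?_, ?_⟩
        · rw [hD01]; exact mul_nonneg hp2 hcrnn
        · rw [hD01]
          calc p2 * c ≤ p2 * 1 := by nlinarith
          _ = p2 := mul_one p2
        · rw [hD21, hD01]; ring
    -- p-part
    have hnren : n = ((n.re : ℝ) : ℂ) := by rw [hndef]; exact hnre
    have hpfacts : ∃ p : ℝ, 0 ≤ p ∧ p ≤ p3 ∧ D 0 0 = p * ξ ∧ D 1 0 = p * (1 - ξ) := by
      by_cases hA11z : A11 = 0
      · refine ⟨0, le_refl 0, hp3, ?_, ?_⟩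
        · rw [(hP 0).1, hA11z, mul_zero, trace_zero, Complex.zero_re, zero_mul]
        · rw [(hP 1).1, hA11z, mul_zero, trace_zero, Complex.zero_re, zero_mul]
      · have hp3z : p3 ≠ 0 := by
          intro h
          exact hA11z (by rw [hM11, h, zero_smul])
        have hσ3N13 : σ 2 * N13 = 0 := by
          have h0 : p3 • (σ 2 * N13) = 0 := by rw [← mul_smul_comm, ← hM11, hσ3A11]
          rcases smul_eq_zero.mp h0 with h | h
          · exact absurd h hp3z
          · exact h
        have hN13ne : N13 ≠ 0 := by
          intro h
          exact hA11z (by rw [hM11, h, smul_zero])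
        obtain ⟨iu, ju, hiju⟩ : ∃ i j, N13 i j ≠ 0 := by
          by_contra hcon
          push_neg at hcon
          exact hN13ne (by ext i j; simpa using hcon i j)
        set u : Fin 2 → ℂ := fun k => N13 k ju with hudef
        have hu : u ≠ 0 := fun h => hiju (congrFun h iu)
        have hσ3u : (σ 2).mulVec u = 0 := by
          have := mulVec_col hσ3N13 ju
          rw [this]
          funext i
          simp
        set m : ℂ := star u ⬝ᵥ u with hmdef
        have hm0 : m ≠ 0 := fun h => hu (dotProduct_star_self_eq_zero.mp h)
        obtain ⟨hmre, hmnn⟩ := nonneg_complex_real (dotProduct_star_self_nonneg u)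
        have hmren : m = ((m.re : ℝ) : ℂ) := by rw [hmdef]; exact hmre
        have hmrpos : 0 < m.re :=
          lt_of_le_of_ne hmnn (fun h => hm0 (by rw [hmren, ← h, Complex.ofReal_zero]))
        have hQ3 : m • σ 2 = Qm u := by
          have := herm_kernel hs3.1.1 hσ3u
          rwa [hs3.2, one_smul] at this
        have hN13σ3 : N13 * σ 2 = 0 := herm_mul_zero_symm hs3.1.1 hN13.1.1 hσ3N13
        have h1 : m • N13 = N13 * Rm u := by
          have h0 : N13 * Qm u = 0 := by rw [← hQ3, mul_smul_comm, hN13σ3, smul_zero]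
          have h2 : m • N13 - N13 * Rm u = 0 := by
            rw [← h0, Qm, mul_sub, mul_smul_comm, mul_one]
          rwa [sub_eq_zero] at h2
        have hstarm : star m = m := by rw [hmren]; exact Complex.conj_ofReal _
        have h2 : m • N13 = Rm u * N13 := by
          have h0 := congrArg conjTranspose h1
          rwa [conjTranspose_smul, hN13.1.1.eq, conjTranspose_mul, Rm_herm, hN13.1.1.eq,
            hstarm] at h0
        set tc : ℂ := star u ⬝ᵥ N13.mulVec u with htcdef
        have htcnn : 0 ≤ tc := hN13.1.dotProduct_mulVec_nonneg u
        obtain ⟨htcre, htcrnn⟩ := nonneg_complex_real htcnn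
        have hsand : (m * m) • N13 = tc • Rm u := by
          calc (m * m) • N13 = m • (m • N13) := (smul_smul _ _ _).symm
            _ = m • (Rm u * N13) := by rw [h2]
            _ = Rm u * (m • N13) := (mul_smul_comm _ _ _).symm
            _ = Rm u * (N13 * Rm u) := by rw [h1]
            _ = tc • Rm u := by rw [← Matrix.mul_assoc, sandwich_s4, htcdef]
        have htcm : tc.re ≤ m.re := by
          have hq := hN13.2.dotProduct_mulVec_nonneg u
          rw [sub_mulVec, one_mulVec, dotProduct_sub] at hq
          have h0 : star u ⬝ᵥ u - star u ⬝ᵥ N13.mulVec u = ((m.re - tc.re : ℝ) : ℂ) := by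
            rw [Complex.ofReal_sub, ← hmren, ← htcre, hmdef, htcdef]
          rw [h0, Complex.zero_le_real] at hq
          linarith
        -- traces
        have hTa : (n * (m * m)) • (σ 0 * N13) = tc • (n • Rm u - Rm v * Rm u) := by
          calc (n * (m * m)) • (σ 0 * N13) = (n • σ 0) * ((m * m) • N13) := by
                rw [smul_mul_assoc, mul_smul_comm, smul_smul]
            _ = Qm v * (tc • Rm u) := by rw [hQ1, hsand]
            _ = tc • (Qm v * Rm u) := mul_smul_comm _ _ _
            _ = tc • (n • Rm u - Rm v * Rm u) := by rw [Qm, sub_mul, smul_mul_assoc, one_mul]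
        have hTat := congrArg Matrix.trace hTa
        rw [trace_smul, trace_smul, trace_sub, trace_smul, trace_Rm, trace_Rm_mul_Rm,
          smul_eq_mul, smul_eq_mul, smul_eq_mul] at hTat
        have hTb : (n * (m * m)) • (σ 1 * N13) = tc • (Rm v * Rm u) := by
          calc (n * (m * m)) • (σ 1 * N13) = (n • σ 1) * ((m * m) • N13) := by
                rw [smul_mul_assoc, mul_smul_comm, smul_smul]
            _ = Rm v * (tc • Rm u) := by rw [hσ2R, hsand]
            _ = tc • (Rm v * Rm u) := mul_smul_comm _ _ _
        have hTbt := congrArg Matrix.trace hTb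
        rw [trace_smul, trace_smul, trace_Rm_mul_Rm, smul_eq_mul, smul_eq_mul] at hTbt
        have hg : (star v ⬝ᵥ u) * (star u ⬝ᵥ v) = m * n - m * (n * (ξ : ℂ)) := by
          have h0 : (m • σ 2) * Rm v = Qm u * Rm v := by rw [hQ3]
          rw [smul_mul_assoc] at h0
          have h0t := congrArg Matrix.trace h0
          have h1' : Qm u * Rm v = m • Rm v - Rm u * Rm v := by
            rw [Qm, sub_mul, smul_mul_assoc, one_mul]
          rw [trace_smul, trace_mul_Rm, ← hξcc, h1', trace_sub, trace_smul, trace_Rm,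
            trace_Rm_mul_Rm, smul_eq_mul, smul_eq_mul, ← hndef] at h0t
          linear_combination h0t
        have key1 : (n * (m * m)) * (σ 0 * N13).trace = tc * (m * (n * (ξ : ℂ))) := by
          linear_combination hTat - tc * hg
        have key2 : (n * (m * m)) * (σ 1 * N13).trace = tc * (m * n - m * (n * (ξ : ℂ))) := by
          linear_combination hTbt + tc * hg
        -- real extraction
        have hT1re := trace_psd_mul_real hs1.1 hN13.1
        have hT2re := trace_psd_mul_real hs2.1 hN13.1
        clear_value n m tc
        rw [hnren] at key1
        rw [hmren] at key1
        rw [htcre] at key1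
        rw [hT1re] at key1
        rw [hnren, hmren, htcre, hT2re] at key2
        have rkey1 : (n.re * (m.re * m.re)) * ((σ 0 * N13).trace).re
            = tc.re * (m.re * (n.re * ξ)) := by exact_mod_cast key1
        have rkey2 : (n.re * (m.re * m.re)) * ((σ 1 * N13).trace).re
            = tc.re * (m.re * n.re - m.re * (n.re * ξ)) := by exact_mod_cast key2
        have hnm0 : n.re * m.re ≠ 0 := mul_ne_zero (ne_of_gt hnrpos) (ne_of_gt hmrpos)
        have hT1v : ((σ 0 * N13).trace).re * m.re = tc.re * ξ :=
          mul_left_cancel₀ hnm0 (by linear_combination rkey1)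
        have hT2v : ((σ 1 * N13).trace).re * m.re = tc.re * (1 - ξ) :=
          mul_left_cancel₀ hnm0 (by linear_combination rkey2)
        refine ⟨p3 * (tc.re / m.re), ?_, ?_, ?_, ?_⟩
        · exact mul_nonneg hp3 (div_nonneg htcrnn (le_of_lt hmrpos))
        · calc p3 * (tc.re / m.re) ≤ p3 * 1 := by
                have := (div_le_one hmrpos).mpr htcm
                nlinarith
            _ = p3 := mul_one p3
        · rw [(hP 0).1, hM11, smul_real_trace]
          have : ((p3 : ℂ) * (σ 0 * N13).trace).re = p3 * ((σ 0 * N13).trace).re := by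
            rw [hT1re]
            push_cast
            simp
          rw [this]
          rw [show ((σ 0 * N13).trace).re = tc.re * ξ / m.re by
            field_simp
            linear_combination hT1v]
          field_simp
        · rw [(hP 1).1, hM11, smul_real_trace]
          have : ((p3 : ℂ) * (σ 1 * N13).trace).re = p3 * ((σ 1 * N13).trace).re := by
            rw [hT2re]
            push_cast
            simp
          rw [this]
          rw [show ((σ 1 * N13).trace).re = tc.re * (1 - ξ) / m.re by
            field_simp
            linear_combination hT2v]
          field_simp
    -- final assembly
    obtain ⟨p, hp0, hple, hD00, hD10⟩ := hpfacts
    obtain ⟨hq0, hqle, hD21⟩ := hqfacts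
    have hpq : p + D 0 1 ≤ 1 := by linarith
    have hD22 : D 2 2 = ξ := hξdef.symm
    by_cases hq1 : D 0 1 = 1
    · have hpz : p = 0 := le_antisymm (by linarith) hp0
      refine ⟨1, 0, 1, ξ, ⟨zero_le_one, le_refl 1⟩, ⟨le_refl 0, zero_le_one⟩,
        ⟨zero_le_one, le_refl 1⟩, ⟨hξpos, hξ1⟩, ?_⟩
      have hDe : D = !![p * ξ, D 0 1, 0; p * (1 - ξ), 0, 1; 0, D 0 1 * (1 - ξ), ξ] := by
        conv_lhs => rw [Matrix.eta_fin_three D]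
        rw [hp02, hp11, hp12, hp20, hD00, hD10, hD21, hD22]
      have e0 : (0:ℝ) * (1 - 1) * ξ = p * ξ := by rw [hpz]; ring
      have e1 : (1:ℝ) * 1 = D 0 1 := by rw [hq1]; norm_num
      have e2 : (0:ℝ) * (1 - 1) * (1 - ξ) = p * (1 - ξ) := by rw [hpz]; ring
      rw [e0, e1, e2]
      exact hDe
    · have hqlt : D 0 1 < 1 := lt_of_le_of_ne (by linarith) hq1
      have h1q : (0:ℝ) < 1 - D 0 1 := by linarith
      refine ⟨1, p / (1 - D 0 1), D 0 1, ξ, ⟨zero_le_one, le_refl 1⟩,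
        ⟨div_nonneg hp0 (le_of_lt h1q), (div_le_one h1q).mpr (by linarith)⟩,
        ⟨hq0, le_of_lt hqlt⟩, ⟨hξpos, hξ1⟩, ?_⟩
      have hDe : D = !![p * ξ, D 0 1, 0; p * (1 - ξ), 0, 1; 0, D 0 1 * (1 - ξ), ξ] := by
        conv_lhs => rw [Matrix.eta_fin_three D]
        rw [hp02, hp11, hp12, hp20, hD00, hD10, hD21, hD22]
      have hf3 : p / (1 - D 0 1) * (1 - D 0 1) = p := by field_simp
      have e0 : p / (1 - D 0 1) * (1 - D 0 1) * ξ = p * ξ := by rw [hf3]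
      have e1 : (1:ℝ) * D 0 1 = D 0 1 := one_mul _
      have e2 : p / (1 - D 0 1) * (1 - D 0 1) * (1 - ξ) = p * (1 - ξ) := by rw [hf3]
      rw [e0, e1, e2]
      exact hDe
end

section
/- For all f₂, f₃, κ ∈ [0,1] and ξ ∈ (0,1], the 3×3 matrix with rows (f₃(1−κ)ξ, f₂κ, 0), (f₃(1−κ)(1−ξ), 0, 1), (0, f₂κ(1−ξ), ξ) belongs to USD₂ ∩ SIM₂. -/
open Matrix
open scoped ComplexOrder

lemma outer_psd {n : Type*} [Fintype n] (v : n → ℂ) :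
    (vecMulVec v (star v)).PosSemidef := by
  rw [vecMulVec_eq Unit]
  simpa only [conjTranspose_replicateRow, star_star] using
    posSemidef_conjTranspose_mul_self (Matrix.replicateRow Unit (star v))

lemma psd_rsmul {n : Type*} [Fintype n] {M : Matrix n n ℂ} (h : M.PosSemidef) {r : ℝ}
    (hr : 0 ≤ r) : (r • M).PosSemidef := by
  have hc : (r • M) = ((r : ℂ) • M) := by ext i j; simp [Complex.real_smul]
  rw [hc]
  refine .of_dotProduct_mulVec_nonneg ?_ fun x => ?_
  · have := h.1
    unfold Matrix.IsHermitian at *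
    rw [conjTranspose_smul, this]
    simp [Complex.conj_ofReal]
  · rw [smul_mulVec, dotProduct_smul, smul_eq_mul]
    exact mul_nonneg (by exact_mod_cast hr) (h.dotProduct_mulVec_nonneg x)

lemma one_sub_smul_helper {A B : Matrix (Fin 2) (Fin 2) ℂ} (h : A + B = 1) (r : ℝ) :
    (1 : Matrix (Fin 2) (Fin 2) ℂ) - r • B = A + (1 - r) • B := by
  rw [← h, sub_smul, one_smul]; abel

lemma main_aux (a b ξ : ℝ) (ha0 : 0 ≤ a) (hb0 : 0 ≤ b) (hab : a + b ≤ 1)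
    (hξ0 : 0 < ξ) (hξ1 : ξ ≤ 1) :
    ∃ ρ M11 M21 M31 M12 M22,
      IsRealization (!![b * ξ, a, 0; b * (1 - ξ), 0, 1; 0, a * (1 - ξ), ξ])
        ρ M11 M21 M31 M12 M22 ∧ Simulable M11 M21 M31 := by
  have hb1 : b ≤ 1 := by linarith
  set u : ℝ := Real.sqrt ξ with hudef
  set w : ℝ := Real.sqrt (1 - ξ) with hwdef
  have hu : u * u = ξ := Real.mul_self_sqrt hξ0.le
  have hw : w * w = 1 - ξ := Real.mul_self_sqrt (by linarith)
  have huC : (u : ℂ) * u = (ξ : ℂ) := by exact_mod_cast hu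
  have hwC : (w : ℂ) * w = (1 : ℂ) - ξ := by
    have : ((w * w : ℝ) : ℂ) = ((1 - ξ : ℝ) : ℂ) := by exact_mod_cast hw
    push_cast at this; exact this
  have hC : (u : ℂ) * u + (w : ℂ) * w = 1 := by rw [huC, hwC]; ring
  set e0 : Fin 2 → ℂ := ![1, 0] with he0
  set e1 : Fin 2 → ℂ := ![0, 1] with he1
  set φ : Fin 2 → ℂ := ![(w : ℂ), (u : ℂ)] with hφ
  set ψ : Fin 2 → ℂ := ![(u : ℂ), -(w : ℂ)] with hψ
  set ρ1 := vecMulVec e0 (star e0) with hρ1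
  set ρ2 := vecMulVec e1 (star e1) with hρ2
  set ρ3 := vecMulVec φ (star φ) with hρ3
  set Pψ := vecMulVec ψ (star ψ) with hPψ
  -- basic resolutions of identity
  have h01 : ρ1 + ρ2 = 1 := by
    ext i j
    fin_cases i <;> fin_cases j <;>
      simp [hρ1, hρ2, he0, he1, vecMulVec_apply, -cons_vecMulVec, -vecMulVec_cons, Matrix.one_apply]
  have hsum : ρ3 + Pψ = 1 := by
    ext i j
    fin_cases i <;> fin_cases j
    · simp [hρ3, hPψ, hφ, hψ, vecMulVec_apply, -cons_vecMulVec, -vecMulVec_cons, Matrix.one_apply, Complex.conj_ofReal]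
      linear_combination hC
    · simp [hρ3, hPψ, hφ, hψ, vecMulVec_apply, -cons_vecMulVec, -vecMulVec_cons, Matrix.one_apply, Complex.conj_ofReal]
      ring
    · simp [hρ3, hPψ, hφ, hψ, vecMulVec_apply, -cons_vecMulVec, -vecMulVec_cons, Matrix.one_apply, Complex.conj_ofReal]
      ring
    · simp [hρ3, hPψ, hφ, hψ, vecMulVec_apply, -cons_vecMulVec, -vecMulVec_cons, Matrix.one_apply, Complex.conj_ofReal]
      linear_combination hC
  have psd1 : ρ1.PosSemidef := outer_psd e0
  have psd2 : ρ2.PosSemidef := outer_psd e1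
  have psd3 : ρ3.PosSemidef := outer_psd φ
  have psdψ : Pψ.PosSemidef := outer_psd ψ
  -- the measurements
  set M11 := b • Pψ with hM11
  set M21 := a • ρ1 with hM21
  set M31 := a • ρ2 + b • ρ3 + (1 - a - b) • (1 : Matrix (Fin 2) (Fin 2) ℂ) with hM31
  have hsumM : M11 + M21 + M31 = 1 := by
    have h1 : a • ρ1 + a • ρ2 = a • (1 : Matrix (Fin 2) (Fin 2) ℂ) := by
      rw [← smul_add, h01]
    have h2 : b • Pψ + b • ρ3 = b • (1 : Matrix (Fin 2) (Fin 2) ℂ) := by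
      rw [← smul_add, add_comm Pψ ρ3, hsum]
    calc M11 + M21 + M31
        = (a • ρ1 + a • ρ2) + (b • Pψ + b • ρ3)
            + (1 - a - b) • (1 : Matrix (Fin 2) (Fin 2) ℂ) := by
          rw [hM11, hM21, hM31]; abel
      _ = a • (1 : Matrix (Fin 2) (Fin 2) ℂ) + b • 1 + (1 - a - b) • 1 := by rw [h1, h2]
      _ = 1 := by
          rw [← add_smul, ← add_smul, show a + b + (1 - a - b) = 1 from by ring, one_smul]
  -- effects
  have eff11 : QubitEffect M11 := by
    refine ⟨psd_rsmul psdψ hb0, ?_⟩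
    rw [hM11, one_sub_smul_helper hsum b]
    exact psd3.add (psd_rsmul psdψ (by linarith))
  have eff21 : QubitEffect M21 := by
    refine ⟨psd_rsmul psd1 ha0, ?_⟩
    rw [hM21, one_sub_smul_helper ((add_comm ρ2 ρ1).trans ((add_comm ρ1 ρ2).symm ▸ h01)) a]
    · exact psd2.add (psd_rsmul psd1 (by linarith))
  have eff31 : QubitEffect M31 := by
    refine ⟨((psd_rsmul psd2 ha0).add (psd_rsmul psd3 hb0)).add
      (psd_rsmul Matrix.PosSemidef.one (by linarith)), ?_⟩
    have e31 : (1 : Matrix (Fin 2) (Fin 2) ℂ) - M31 = M11 + M21 := by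
      rw [← hsumM]; abel
    rw [e31]
    exact (psd_rsmul psdψ hb0).add (psd_rsmul psd1 ha0)
  have eff12 : QubitEffect ρ2 := by
    refine ⟨psd2, ?_⟩
    have : (1 : Matrix (Fin 2) (Fin 2) ℂ) - ρ2 = ρ1 := by rw [← h01]; abel
    rw [this]; exact psd1
  have eff22 : QubitEffect ρ1 := by
    refine ⟨psd1, ?_⟩
    have : (1 : Matrix (Fin 2) (Fin 2) ℂ) - ρ1 = ρ2 := by rw [← h01]; abel
    rw [this]; exact psd2
  -- states
  have st1 : QubitState ρ1 := by
    refine ⟨psd1, ?_⟩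
    simp [hρ1, he0, vecMulVec_apply, -cons_vecMulVec, -vecMulVec_cons, Matrix.trace, Fin.sum_univ_succ]
  have st2 : QubitState ρ2 := by
    refine ⟨psd2, ?_⟩
    simp [hρ2, he1, vecMulVec_apply, -cons_vecMulVec, -vecMulVec_cons, Matrix.trace, Fin.sum_univ_succ]
  have st3 : QubitState ρ3 := by
    refine ⟨psd3, ?_⟩
    simp [hρ3, hφ, vecMulVec_apply, -cons_vecMulVec, -vecMulVec_cons, Matrix.trace, Fin.sum_univ_succ, Complex.conj_ofReal]
    linear_combination hC
  -- traces
  have t10 : ((ρ1 * M11).trace) = ((b * ξ : ℝ) : ℂ) := by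
    simp [hρ1, hM11, hPψ, he0, hψ, vecMulVec_apply, -cons_vecMulVec, -vecMulVec_cons, Matrix.trace, Matrix.mul_apply,
      Fin.sum_univ_succ, Complex.conj_ofReal, Complex.real_smul]
    push_cast
    exact Or.inl huC
  have t11 : ((ρ1 * M21).trace) = ((a : ℝ) : ℂ) := by
    simp [hρ1, hM21, he0, vecMulVec_apply, -cons_vecMulVec, -vecMulVec_cons, Matrix.trace, Matrix.mul_apply,
      Fin.sum_univ_succ, Complex.conj_ofReal, Complex.real_smul]
  have t12 : ((ρ1 * ρ2).trace) = ((0 : ℝ) : ℂ) := by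
    simp [hρ1, hρ2, he0, he1, vecMulVec_apply, -cons_vecMulVec, -vecMulVec_cons, Matrix.trace, Matrix.mul_apply,
      Fin.sum_univ_succ, Complex.conj_ofReal]
  have t20 : ((ρ2 * M11).trace) = ((b * (1 - ξ) : ℝ) : ℂ) := by
    simp [hρ2, hM11, hPψ, he1, hψ, vecMulVec_apply, -cons_vecMulVec, -vecMulVec_cons, Matrix.trace, Matrix.mul_apply,
      Fin.sum_univ_succ, Complex.conj_ofReal, Complex.real_smul]
    push_cast
    exact Or.inl hwC
  have t21 : ((ρ2 * M21).trace) = ((0 : ℝ) : ℂ) := by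
    simp [hρ2, hM21, hρ1, he0, he1, vecMulVec_apply, -cons_vecMulVec, -vecMulVec_cons, Matrix.trace, Matrix.mul_apply,
      Fin.sum_univ_succ, Complex.conj_ofReal, Complex.real_smul]
  have t22 : ((ρ2 * ρ2).trace) = ((1 : ℝ) : ℂ) := by
    simp [hρ2, he1, vecMulVec_apply, -cons_vecMulVec, -vecMulVec_cons, Matrix.trace, Matrix.mul_apply,
      Fin.sum_univ_succ, Complex.conj_ofReal]
  have t30 : ((ρ3 * M11).trace) = ((0 : ℝ) : ℂ) := by
    simp [hρ3, hM11, hPψ, hφ, hψ, vecMulVec_apply, -cons_vecMulVec, -vecMulVec_cons, Matrix.trace, Matrix.mul_apply,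
      Fin.sum_univ_succ, Complex.conj_ofReal, Complex.real_smul]
    push_cast
    ring
  have t31 : ((ρ3 * M21).trace) = ((a * (1 - ξ) : ℝ) : ℂ) := by
    simp [hρ3, hM21, hρ1, hφ, he0, vecMulVec_apply, -cons_vecMulVec, -vecMulVec_cons, Matrix.trace, Matrix.mul_apply,
      Fin.sum_univ_succ, Complex.conj_ofReal, Complex.real_smul]
    push_cast
    exact Or.inl hwC
  have t32 : ((ρ3 * ρ2).trace) = ((ξ : ℝ) : ℂ) := by
    simp [hρ3, hρ2, hφ, he1, vecMulVec_apply, -cons_vecMulVec, -vecMulVec_cons, Matrix.trace, Matrix.mul_apply,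
      Fin.sum_univ_succ, Complex.conj_ofReal]
    push_cast
    linear_combination huC
  -- the realization
  refine ⟨![ρ1, ρ2, ρ3], M11, M21, M31, ρ2, ρ1, ⟨?_, eff11, eff21, eff31, hsumM,
    eff12, eff22, by rw [add_comm]; exact h01, ?_⟩, ?_⟩
  · intro x; fin_cases x
    · exact st1
    · exact st2
    · exact st3
  · intro x; fin_cases x
    · refine ⟨?_, ?_, ?_⟩
      · show b * ξ = ((ρ1 * M11).trace).re
        rw [t10, Complex.ofReal_re]
      · show a = ((ρ1 * M21).trace).re
        rw [t11, Complex.ofReal_re]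
      · show (0 : ℝ) = ((ρ1 * ρ2).trace).re
        rw [t12, Complex.ofReal_re]
    · refine ⟨?_, ?_, ?_⟩
      · show b * (1 - ξ) = ((ρ2 * M11).trace).re
        rw [t20, Complex.ofReal_re]
      · show (0 : ℝ) = ((ρ2 * M21).trace).re
        rw [t21, Complex.ofReal_re]
      · show (1 : ℝ) = ((ρ2 * ρ2).trace).re
        rw [t22, Complex.ofReal_re]
    · refine ⟨?_, ?_, ?_⟩
      · show (0 : ℝ) = ((ρ3 * M11).trace).re
        rw [t30, Complex.ofReal_re]
      · show a * (1 - ξ) = ((ρ3 * M21).trace).re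
        rw [t31, Complex.ofReal_re]
      · show ξ = ((ρ3 * ρ2).trace).re
        rw [t32, Complex.ofReal_re]
  -- simulability
  · set c : ℝ := if b = 1 then 0 else a / (1 - b) with hcdef
    have hbpos : b ≠ 1 → 0 < 1 - b := fun h => by
      rcases lt_or_eq_of_le hb1 with h' | h'
      · linarith
      · exact absurd h' h
    have hc0 : 0 ≤ c := by
      rw [hcdef]; split_ifs with h
      · exact le_refl 0
      · exact div_nonneg ha0 (hbpos h).le
    have hc1 : c ≤ 1 := by
      rw [hcdef]; split_ifs with h
      · norm_num
      · rw [div_le_one (hbpos h)]; linarith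
    have hca : (1 - b) * c = a := by
      rw [hcdef]; split_ifs with h
      · have : a = 0 := by rw [h] at hab; linarith
        rw [this, h]; ring
      · have hne : (1:ℝ) - b ≠ 0 := (hbpos h).ne'
        field_simp
    refine ⟨0, 1 - b, b, 0, c • ρ1, Pψ, le_refl 0, by linarith, hb0, by ring,
      ⟨Matrix.PosSemidef.zero, by simpa using Matrix.PosSemidef.one⟩,
      ⟨psd_rsmul psd1 hc0, ?_⟩, ⟨psdψ, ?_⟩, ?_, ?_, ?_⟩
    · rw [one_sub_smul_helper ((add_comm ρ2 ρ1).trans h01) c]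
      exact psd2.add (psd_rsmul psd1 (by linarith))
    · rw [show (1 : Matrix (Fin 2) (Fin 2) ℂ) - Pψ = ρ3 from by rw [← hsum]; abel]
      exact psd3
    · rw [zero_smul, zero_add]
    · rw [zero_smul, zero_add, smul_smul, hca]
    · have hcaC : ((1 : ℂ) - b) * c = a := by exact_mod_cast hca
      rw [one_sub_smul_helper ((add_comm ρ2 ρ1).trans h01) c,
        show (1 : Matrix (Fin 2) (Fin 2) ℂ) - Pψ = ρ3 from by rw [← hsum]; abel,
        hM31, ← h01]
      match_scalars
      all_goals try ring
      all_goals linear_combination hca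

/-- Converse: for all `f2, f3, κ ∈ [0,1]` and `ξ ∈ (0,1]`, the matrix of Eq. (13)
belongs to USD₂ ∩ SIM₂. -/
theorem form_mem_usd2_inter_sim2 (f2 f3 κ ξ : ℝ)
    (hf2 : f2 ∈ Set.Icc (0 : ℝ) 1) (hf3 : f3 ∈ Set.Icc (0 : ℝ) 1)
    (hκ : κ ∈ Set.Icc (0 : ℝ) 1) (hξ : ξ ∈ Set.Ioc (0 : ℝ) 1) :
    USD2 (!![f3 * (1 - κ) * ξ,       f2 * κ,           0;
             f3 * (1 - κ) * (1 - ξ), 0,                1;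
             0,                      f2 * κ * (1 - ξ), ξ]) ∧
    SIM2 (!![f3 * (1 - κ) * ξ,       f2 * κ,           0;
             f3 * (1 - κ) * (1 - ξ), 0,                1;
             0,                      f2 * κ * (1 - ξ), ξ]) := by
  obtain ⟨hf20, hf21⟩ := hf2
  obtain ⟨hf30, hf31⟩ := hf3
  obtain ⟨hκ0, hκ1⟩ := hκ
  obtain ⟨hξ0, hξ1⟩ := hξ
  have ha0 : 0 ≤ f2 * κ := mul_nonneg hf20 hκ0
  have hb0 : 0 ≤ f3 * (1 - κ) := mul_nonneg hf30 (by linarith)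
  have hab : f2 * κ + f3 * (1 - κ) ≤ 1 := by nlinarith
  obtain ⟨ρ, M11, M21, M31, M12, M22, hreal, hsim⟩ :=
    main_aux (f2 * κ) (f3 * (1 - κ)) ξ ha0 hb0 hab hξ0 hξ1
  constructor
  · refine ⟨⟨?_, ?_, ?_, ?_⟩, ρ, M11, M21, M31, M12, M22, hreal⟩ <;> rfl
  · exact ⟨ρ, M11, M21, M31, M12, M22, hreal, hsim⟩
end
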